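/- arXiv:math-ph/0311049 — 6 statements merged into one kernel-verified Lean document; each statement's English description precedes it below -/
import Mathlib

section
/- For every integer d ≥ 1, every finite nonempty Λ ⊂ ℤ^d, and every integer 0 ≤ N ≤ |Λ|, the sum of the N lowest eigenvalues of the discrete Laplacian satisfies S_{Λ,N} ≥ e(N/|Λ|)·|Λ|. -/
open scoped BigOperators

noncomputable section

/-- `ℓ¹` distance on `ℤ^d`. -/
def dist1 (d : ℕ) (x y : Fin d → ℤ) : ℕ := ∑ i, (x i - y i).natAbs

/-- Lattice dispersion relation `ε_k = 2d − 2 Σᵢ cos kᵢ`. -/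
def epsk (d : ℕ) (k : Fin d → ℝ) : ℝ := 2 * d - 2 * ∑ i, Real.cos (k i)

/-- `k` belongs to the Brillouin zone `[−π, π]^d`. -/
def inBZ (d : ℕ) (k : Fin d → ℝ) : Prop := ∀ i, |k i| ≤ Real.pi

/-- Volume of `{k ∈ [−π,π]^d : ε_k < E}`. -/
def volBelow (d : ℕ) (E : ℝ) : ℝ :=
  (MeasureTheory.volume {k : Fin d → ℝ | inBZ d k ∧ epsk d k < E}).toReal

/-- The Fermi level `ε_F(ρ)`, defined by `ρ = (2π)^{−d}·vol{k ∈ [−π,π]^d : ε_k < ε_F(ρ)}`. -/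
def fermiLevel (d : ℕ) (ρ : ℝ) : ℝ :=
  sInf {E : ℝ | ρ ≤ volBelow d E / (2 * Real.pi) ^ d}

/-- Ground-state energy per site of free lattice fermions at density `ρ`:
`e(ρ) = (2π)^{−d} ∫_{ε_k < ε_F(ρ)} ε_k dk`. -/
def enGS (d : ℕ) (ρ : ℝ) : ℝ :=
  (∫ k in {k : Fin d → ℝ | inBZ d k ∧ epsk d k < fermiLevel d ρ}, epsk d k) /
    (2 * Real.pi) ^ d

/-- `ξ(ρ) = ρ·ε_F(ρ) − e(ρ)`. -/
def xiFun (d : ℕ) (ρ : ℝ) : ℝ := ρ * fermiLevel d ρ - enGS d ρ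

/-- The `2d` unit lattice vectors of `ℤ^d`, indexed by a coordinate and a sign. -/
def unitVec (d : ℕ) (p : Fin d × Bool) : Fin d → ℤ :=
  fun j => if j = p.1 then (if p.2 then 1 else -1) else 0

/-- `B(Λ)`: the number of bonds `(x, y)` with `x ∈ Λ`, `y ∉ Λ`, `|x − y|₁ = 1`. -/
def bonds (d : ℕ) (Λ : Finset (Fin d → ℤ)) : ℕ :=
  ∑ x ∈ Λ, (Finset.univ.filter fun p : Fin d × Bool => x + unitVec d p ∉ Λ).card

/-- The discrete Laplacian `h_Λ` as a matrix:
`(h_Λ φ)(x) = −Σ_{y∈Λ, |y−x|₁=1} φ(y) + 2d·φ(x)`. -/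
def lapMatrix (d : ℕ) (Λ : Finset (Fin d → ℤ)) : Matrix Λ Λ ℂ :=
  fun x y => if dist1 d x y = 1 then -1 else if x = y then (2 * d : ℂ) else 0

/-- The discrete Laplacian is Hermitian. -/
theorem lapMatrix_isHermitian (d : ℕ) (Λ : Finset (Fin d → ℤ)) :
    (lapMatrix d Λ).IsHermitian := by
  ext x y
  have hsymm : dist1 d (y : Fin d → ℤ) x = dist1 d x y := by
    unfold dist1
    exact Finset.sum_congr rfl fun i _ => by rw [← Int.natAbs_neg, neg_sub]
  simp only [Matrix.conjTranspose_apply, lapMatrix, hsymm]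
  by_cases h1 : dist1 d (x : Fin d → ℤ) (y : Fin d → ℤ) = 1 <;>
    by_cases h2 : x = y <;>
      simp [h1, h2, eq_comm, apply_ite (starRingEnd ℂ), Complex.conj_ofNat]

/-- `S_{Λ,N}`: the sum of the `N` lowest eigenvalues of `h_Λ` (with multiplicity). -/
def lowSum (d : ℕ) (Λ : Finset (Fin d → ℤ)) (N : ℕ) : ℝ :=
  ((Multiset.sort
      (Finset.univ.val.map (lapMatrix_isHermitian d Λ).eigenvalues) (· ≤ ·)).take N).sum

/-- The minimal surface energy
`a(ρ) = inf_Λ [S_{Λ, ρ|Λ|} − e(ρ)|Λ|]/B(Λ)`, the infimum running over all finite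
nonempty `Λ ⊂ ℤ^d` such that `ρ|Λ|` is an integer. -/
def aSurf (d : ℕ) (ρ : ℚ) : ℝ :=
  sInf {r : ℝ | ∃ (Λ : Finset (Fin d → ℤ)) (N : ℕ), Λ.Nonempty ∧
    (N : ℚ) = ρ * Λ.card ∧ r = (lowSum d Λ N - enGS d (ρ : ℝ) * Λ.card) / bonds d Λ}

end

noncomputable section Aux

open MeasureTheory Complex Finset
open scoped Real ComplexConjugate

namespace LowSumAux

/-- The Brillouin zone as a box. -/
def box (d : ℕ) : Set (Fin d → ℝ) := Set.univ.pi fun _ => Set.Icc (-Real.pi) Real.pi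

lemma isCompact_box (d : ℕ) : IsCompact (box d) := isCompact_univ_pi fun _ => isCompact_Icc

lemma measurableSet_box (d : ℕ) : MeasurableSet (box d) :=
  MeasurableSet.univ_pi fun _ => measurableSet_Icc

lemma inBZ_iff_mem_box (d : ℕ) (k : Fin d → ℝ) : inBZ d k ↔ k ∈ box d := by
  unfold inBZ box
  rw [Set.mem_univ_pi]
  exact forall_congr' fun i => abs_le

lemma volume_box_lt_top (d : ℕ) : MeasureTheory.volume (box d) < ⊤ :=
  (isCompact_box d).measure_lt_top

/-- Characters `e^{i k·m}`. -/
def ch (d : ℕ) (m : Fin d → ℤ) (k : Fin d → ℝ) : ℂ :=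
  Complex.exp (Complex.I * ∑ i, (m i : ℂ) * (k i : ℂ))

lemma continuous_ch (d : ℕ) (m : Fin d → ℤ) : Continuous (ch d m) := by
  apply Complex.continuous_exp.comp
  exact continuous_const.mul (continuous_finset_sum _ fun i _ =>
    continuous_const.mul (Complex.continuous_ofReal.comp (continuous_apply i)))

lemma integrableOn_box (d : ℕ) {E : Type*} [NormedAddCommGroup E]
    {f : (Fin d → ℝ) → E} (hf : Continuous f) :
    IntegrableOn f (box d) := by
  exact hf.continuousOn.integrableOn_compact (isCompact_box d)

lemma norm_ch (d : ℕ) (m : Fin d → ℤ) (k : Fin d → ℝ) : ‖ch d m k‖ = 1 := by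
  have h : (∑ i, (m i : ℂ) * (k i : ℂ)) = (((∑ i, (m i : ℝ) * k i) : ℝ) : ℂ) := by
    push_cast; ring
  rw [ch, h, Complex.norm_exp]
  simp

lemma ch_add (d : ℕ) (a b : Fin d → ℤ) (k : Fin d → ℝ) :
    ch d (a + b) k = ch d a k * ch d b k := by
  rw [ch, ch, ch, ← Complex.exp_add, ← mul_add, ← Finset.sum_add_distrib]
  congr 2
  exact Finset.sum_congr rfl fun i _ => by push_cast [Pi.add_apply]; ring

lemma conj_ch (d : ℕ) (m : Fin d → ℤ) (k : Fin d → ℝ) : conj (ch d m k) = ch d (-m) k := by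
  rw [ch, ch, ← Complex.exp_conj]
  congr 1
  simp only [map_mul, map_sum, Complex.conj_I, Complex.conj_ofReal, map_intCast]
  have hsum : ∑ i, (((-m) i : ℂ)) * ((k i : ℝ) : ℂ) = -∑ i, ((m i : ℂ)) * ((k i : ℝ) : ℂ) := by
    rw [← Finset.sum_neg_distrib]
    exact Finset.sum_congr rfl fun i _ => by push_cast [Pi.neg_apply]; ring
  rw [hsum]
  ring

lemma integral_char (n : ℤ) :
    ∫ t in Set.Icc (-Real.pi) Real.pi, Complex.exp (Complex.I * n * t) =
      if n = 0 then ((2 * Real.pi : ℝ) : ℂ) else 0 := by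
  have hle : (-Real.pi : ℝ) ≤ Real.pi := by linarith [Real.pi_pos]
  rcases eq_or_ne n 0 with h | h
  · subst h
    simp only [Int.cast_zero, mul_zero, zero_mul, Complex.exp_zero, if_true]
    rw [MeasureTheory.setIntegral_const]
    rw [Real.volume_real_Icc_of_le hle]
    push_cast
    rw [Complex.real_smul]
    push_cast
    ring
  · rw [if_neg h]
    rw [MeasureTheory.integral_Icc_eq_integral_Ioc,
      ← intervalIntegral.integral_of_le hle]
    have hc : (Complex.I * n : ℂ) ≠ 0 := by
      simp [Complex.I_ne_zero, Int.cast_injective.ne_iff, h]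
    have key := integral_exp_mul_complex (a := -Real.pi) (b := Real.pi) hc
    have heq : ∀ t : ℝ, Complex.exp (Complex.I * n * t) = Complex.exp ((Complex.I * n) * t) :=
      fun t => rfl
    rw [key]
    have h1 : Complex.exp (Complex.I * n * (Real.pi : ℂ)) = (-1 : ℂ) ^ n := by
      have : (Complex.I * n * (Real.pi : ℂ)) = n * ((Real.pi : ℂ) * Complex.I) := by ring
      rw [this, Complex.exp_int_mul, Complex.exp_pi_mul_I]
    have h2 : Complex.exp (Complex.I * n * ((-Real.pi : ℝ) : ℂ)) = (-1 : ℂ) ^ (-n) := by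
      have : (Complex.I * n * ((-Real.pi : ℝ) : ℂ)) = ((-n : ℤ) : ℂ) * ((Real.pi : ℂ) * Complex.I) := by
        push_cast; ring
      rw [this, Complex.exp_int_mul, Complex.exp_pi_mul_I]
    have h3 : ((-1 : ℂ)) ^ (-n) = (-1 : ℂ) ^ n := by
      rw [zpow_neg]
      refine inv_eq_of_mul_eq_one_left ?_
      rw [← mul_zpow]
      norm_num
    rw [h1, h2, h3, sub_self, zero_div]

lemma integral_ch (d : ℕ) (m : Fin d → ℤ) :
    ∫ k in box d, ch d m k = if m = 0 then (((2 * Real.pi) ^ d : ℝ) : ℂ) else 0 := by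
  have hsplit : ∀ k : Fin d → ℝ, ch d m k =
      ∏ i, Complex.exp (Complex.I * (m i) * (k i)) := by
    intro k
    rw [ch, Finset.mul_sum, Complex.exp_sum]
    exact Finset.prod_congr rfl fun i _ => by ring_nf
  have hind : (box d).indicator (ch d m) = fun k =>
      ∏ i, (Set.Icc (-Real.pi) Real.pi).indicator
        (fun t => Complex.exp (Complex.I * (m i) * (t : ℂ))) (k i) := by
    funext k
    by_cases hk : k ∈ box d
    · rw [Set.indicator_of_mem hk, hsplit]
      refine Finset.prod_congr rfl fun i _ => ?_
      rw [Set.indicator_of_mem]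
      exact hk i (Set.mem_univ i)
    · rw [Set.indicator_of_notMem hk]
      obtain ⟨i, -, hi⟩ : ∃ i ∈ Finset.univ, k i ∉ Set.Icc (-Real.pi) Real.pi := by
        by_contra hcon
        push_neg at hcon
        exact hk fun i _ => hcon i (Finset.mem_univ i)
      refine (Finset.prod_eq_zero (Finset.mem_univ i) ?_).symm
      rw [Set.indicator_of_notMem hi]
  rw [← MeasureTheory.integral_indicator (measurableSet_box d), hind]
  rw [MeasureTheory.volume_pi, MeasureTheory.integral_fintype_prod_eq_prod
    (fun i t => (Set.Icc (-Real.pi) Real.pi).indicator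
      (fun t => Complex.exp (Complex.I * (m i) * (t : ℂ))) t)]
  have hfac : ∀ i, (∫ t : ℝ, (Set.Icc (-Real.pi) Real.pi).indicator
      (fun t => Complex.exp (Complex.I * (m i) * (t : ℂ))) t)
      = if m i = 0 then ((2 * Real.pi : ℝ) : ℂ) else 0 := by
    intro i
    rw [MeasureTheory.integral_indicator measurableSet_Icc]
    exact integral_char (m i)
  rw [Finset.prod_congr rfl fun i _ => hfac i]
  rcases eq_or_ne m 0 with h | h
  · subst h
    simp only [Pi.zero_apply, if_pos rfl, Finset.prod_const, card_univ, Fintype.card_fin]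
    push_cast
    ring
  · rw [if_neg h]
    obtain ⟨i, hi⟩ : ∃ i, m i ≠ 0 := by
      by_contra hcon
      push_neg at hcon
      exact h (funext hcon)
    exact Finset.prod_eq_zero (Finset.mem_univ i) (by rw [if_neg hi])

lemma epsk_nonneg (d : ℕ) (k : Fin d → ℝ) : 0 ≤ epsk d k := by
  have h : ∑ i, Real.cos (k i) ≤ ∑ _i : Fin d, (1 : ℝ) :=
    Finset.sum_le_sum fun i _ => Real.cos_le_one _
  simp only [Finset.sum_const, card_univ, Fintype.card_fin, nsmul_eq_mul, mul_one] at h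
  unfold epsk
  nlinarith

lemma continuous_epsk (d : ℕ) : Continuous (epsk d) := by
  unfold epsk
  exact continuous_const.sub (continuous_const.mul (continuous_finset_sum _ fun i _ =>
    Real.continuous_cos.comp (continuous_apply i)))

lemma epsk_eq_ch (d : ℕ) (k : Fin d → ℝ) :
    (epsk d k : ℂ) =
      2 * d - ∑ i, (ch d (Pi.single i 1) k + ch d (-Pi.single i 1) k) := by
  have hch : ∀ i : Fin d, ch d (Pi.single i 1) k + ch d (-Pi.single i 1) k
      = 2 * Complex.cos (k i) := by
    intro i
    have h1 : (∑ j, ((Pi.single i 1 : Fin d → ℤ) j : ℂ) * (k j : ℂ)) = (k i : ℂ) := by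
      rw [Finset.sum_eq_single i]
      · simp
      · intro j _ hj; simp [Pi.single_apply, hj]
      · simp
    have h2 : (∑ j, ((-Pi.single i 1 : Fin d → ℤ) j : ℂ) * (k j : ℂ)) = -(k i : ℂ) := by
      rw [Finset.sum_eq_single i]
      · simp
      · intro j _ hj; simp [Pi.single_apply, hj]
      · simp
    rw [ch, ch, h1, h2, Complex.cos]
    ring_nf
  have hs : ∑ i, (ch d (Pi.single i 1) k + ch d (-Pi.single i 1) k)
      = ∑ i, 2 * Complex.cos ((k i : ℂ)) := Finset.sum_congr rfl fun i _ => hch i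
  rw [hs]
  unfold epsk
  push_cast [Complex.ofReal_cos]
  rw [Finset.mul_sum]

/-- Fourier coefficients of the Laplacian symbol. -/
def cM (d : ℕ) (m : Fin d → ℤ) : ℂ :=
  (if m = 0 then (2 * d : ℂ) else 0) -
    ∑ i : Fin d, ((if m + Pi.single i 1 = 0 then (1 : ℂ) else 0) +
      (if m - Pi.single i 1 = 0 then (1 : ℂ) else 0))

set_option maxHeartbeats 1000000 in
lemma integral_eps_ch (d : ℕ) (m : Fin d → ℤ) :
    ∫ k in box d, (epsk d k : ℂ) * ch d m k = (((2 * Real.pi) ^ d : ℝ) : ℂ) * cM d m := by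
  have hpt : ∀ k, (epsk d k : ℂ) * ch d m k =
      2 * d * ch d m k - ∑ i, (ch d (Pi.single i 1 + m) k + ch d (-Pi.single i 1 + m) k) := by
    intro k
    rw [epsk_eq_ch, sub_mul, Finset.sum_mul]
    congr 1
    exact Finset.sum_congr rfl fun i _ => by rw [add_mul, ← ch_add, ← ch_add]
  rw [MeasureTheory.setIntegral_congr_fun (measurableSet_box d) fun k _ => hpt k]
  have h1 : IntegrableOn (fun k => 2 * (d : ℂ) * ch d m k) (box d) volume :=
    (integrableOn_box d (continuous_ch d m)).const_mul (2 * (d : ℂ))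
  have h2 : ∀ i : Fin d, IntegrableOn
      (fun k => ch d (Pi.single i 1 + m) k + ch d (-Pi.single i 1 + m) k) (box d) volume :=
    fun i => (integrableOn_box d (continuous_ch d _)).add (integrableOn_box d (continuous_ch d _))
  have h3 : IntegrableOn
      (fun k => ∑ i, (ch d (Pi.single i 1 + m) k + ch d (-Pi.single i 1 + m) k)) (box d) volume :=
    MeasureTheory.integrable_finset_sum _ fun i _ => h2 i
  rw [MeasureTheory.integral_sub h1 h3]
  rw [MeasureTheory.integral_const_mul, MeasureTheory.integral_finset_sum _ fun i _ => h2 i]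
  have hadd : ∀ i : Fin d, (∫ k in box d,
        (ch d (Pi.single i 1 + m) k + ch d (-Pi.single i 1 + m) k))
      = (if Pi.single i 1 + m = 0 then (((2 * Real.pi) ^ d : ℝ) : ℂ) else 0)
        + (if -Pi.single i 1 + m = 0 then (((2 * Real.pi) ^ d : ℝ) : ℂ) else 0) := by
    intro i
    rw [MeasureTheory.integral_add (integrableOn_box d (continuous_ch d _))
      (integrableOn_box d (continuous_ch d _)), integral_ch, integral_ch]
  rw [Finset.sum_congr rfl fun i _ => hadd i, integral_ch]
  rw [cM, mul_sub, Finset.mul_sum]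
  congr 1
  · split_ifs <;> ring
  · refine Finset.sum_congr rfl fun i _ => ?_
    have c1 : Pi.single i 1 + m = 0 ↔ m + Pi.single i 1 = 0 := by rw [add_comm]
    have c2 : -Pi.single i 1 + m = 0 ↔ m - Pi.single i 1 = 0 := by rw [neg_add_eq_sub]
    simp only [c1, c2]
    split_ifs <;> ring

lemma sum_natAbs_eq_one_iff (d : ℕ) (m : Fin d → ℤ) :
    (∑ i, (m i).natAbs) = 1 ↔ ∃ i, m = Pi.single i 1 ∨ m = -Pi.single i 1 := by
  constructor
  · intro h
    obtain ⟨i, hi⟩ : ∃ i, m i ≠ 0 := by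
      by_contra hcon
      push_neg at hcon
      rw [Finset.sum_eq_zero (fun i _ => by rw [hcon i]; rfl)] at h
      exact one_ne_zero h.symm
    have h1 : (m i).natAbs + ∑ j ∈ Finset.univ.erase i, (m j).natAbs = 1 := by
      exact (Finset.add_sum_erase _ _ (Finset.mem_univ i)).trans h
    have hpos : 1 ≤ (m i).natAbs := Int.natAbs_pos.2 hi
    have habs : (m i).natAbs = 1 ∧ ∑ j ∈ Finset.univ.erase i, (m j).natAbs = 0 := by omega
    have hzero : ∀ j, j ≠ i → m j = 0 := by
      intro j hj
      have := (Finset.sum_eq_zero_iff).1 habs.2 j (Finset.mem_erase.2 ⟨hj, Finset.mem_univ j⟩)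
      exact Int.natAbs_eq_zero.1 this
    refine ⟨i, ?_⟩
    rcases Int.natAbs_eq_iff.1 habs.1 with h1' | h1'
    · left
      funext j
      by_cases hj : j = i
      · subst hj; simpa using h1'
      · rw [hzero j hj, Pi.single_apply, if_neg hj]
    · right
      funext j
      by_cases hj : j = i
      · subst hj; simpa using h1'
      · rw [hzero j hj, Pi.neg_apply, Pi.single_apply, if_neg hj, neg_zero]
  · rintro ⟨i, h | h⟩ <;> subst h <;>
      [skip; simp only [Pi.neg_apply, Int.natAbs_neg]] <;>
    · rw [Finset.sum_eq_single i]
      · simp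
      · intro j _ hj; rw [Pi.single_apply, if_neg hj]; rfl
      · intro hj; exact absurd (Finset.mem_univ i) hj

lemma cM_eq_lap (d : ℕ) (Λ : Finset (Fin d → ℤ)) (x y : ↥Λ) :
    cM d ((x : Fin d → ℤ) - (y : Fin d → ℤ)) = lapMatrix d Λ x y := by
  set m : Fin d → ℤ := (x : Fin d → ℤ) - (y : Fin d → ℤ) with hm
  have hdist : dist1 d (x : Fin d → ℤ) (y : Fin d → ℤ) = ∑ i, (m i).natAbs := by
    unfold dist1
    exact Finset.sum_congr rfl fun i _ => rfl
  rw [lapMatrix]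
  by_cases h1 : dist1 d (x : Fin d → ℤ) (y : Fin d → ℤ) = 1
  · rw [if_pos h1]
    obtain ⟨i, hi⟩ := (sum_natAbs_eq_one_iff d m).1 (hdist ▸ h1)
    have hm0 : m ≠ 0 := by
      rcases hi with h | h <;> rw [h] <;> intro h0 <;>
        simpa using congrFun h0 i
    rw [cM, if_neg hm0]
    have hsum : ∑ j : Fin d, ((if m + Pi.single j 1 = 0 then (1 : ℂ) else 0) +
        (if m - Pi.single j 1 = 0 then (1 : ℂ) else 0)) = 1 := by
      rw [Finset.sum_eq_single i]
      · rcases hi with h | h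
        · rw [if_neg, if_pos (by rw [h, sub_self])]
          · ring
          · intro h0
            have := congrFun h0 i
            rw [h] at this
            simpa using this
        · rw [if_pos (by rw [h, neg_add_cancel]), if_neg]
          · ring
          · intro h0
            have := congrFun h0 i
            rw [h] at this
            simpa using this
      · intro j _ hj
        rcases hi with h | h
        · rw [if_neg, if_neg]
          · norm_num
          · intro h0
            have := congrFun h0 j
            rw [h] at this
            simp [Pi.single_apply, hj.symm, (Ne.symm hj)] at this
          · intro h0
            have := congrFun h0 i
            rw [h] at this
            simp [Pi.single_apply, hj.symm, Ne.symm hj] at this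
        · rw [if_neg, if_neg]
          · norm_num
          · intro h0
            have := congrFun h0 i
            rw [h] at this
            simp [Pi.single_apply, hj.symm, Ne.symm hj] at this
          · intro h0
            have := congrFun h0 j
            rw [h] at this
            simp [Pi.single_apply, hj.symm, Ne.symm hj] at this
      · intro h; exact absurd (Finset.mem_univ i) h
    rw [hsum]
    ring
  · rw [if_neg h1]
    by_cases h2 : x = y
    · rw [if_pos h2]
      have hm0 : m = 0 := by rw [hm, h2, sub_self]
      rw [cM, if_pos hm0]
      have hsum : ∑ j : Fin d, ((if m + Pi.single j 1 = 0 then (1 : ℂ) else 0) +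
          (if m - Pi.single j 1 = 0 then (1 : ℂ) else 0)) = 0 := by
        refine Finset.sum_eq_zero fun j _ => ?_
        rw [if_neg, if_neg]
        · ring
        · intro h0
          have := congrFun h0 j
          rw [hm0] at this
          simpa using this
        · intro h0
          have := congrFun h0 j
          rw [hm0] at this
          simpa using this
      rw [hsum]
      ring
    · rw [if_neg h2]
      have hm0 : m ≠ 0 := by
        rw [hm, sub_ne_zero]
        exact fun hc => h2 (Subtype.ext hc)
      have hno : ¬ ∃ i, m = Pi.single i 1 ∨ m = -Pi.single i 1 := by
        intro hc
        exact h1 (hdist.trans ((sum_natAbs_eq_one_iff d m).2 hc))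
      push_neg at hno
      rw [cM, if_neg hm0]
      have hsum : ∑ j : Fin d, ((if m + Pi.single j 1 = 0 then (1 : ℂ) else 0) +
          (if m - Pi.single j 1 = 0 then (1 : ℂ) else 0)) = 0 := by
        refine Finset.sum_eq_zero fun j _ => ?_
        rw [if_neg, if_neg]
        · ring
        · intro h0
          exact (hno j).1 (by rw [sub_eq_zero] at h0; exact h0)
        · intro h0
          exact (hno j).2 (by rw [add_eq_zero_iff_eq_neg] at h0; exact h0)
      rw [hsum]
      ring

/-- Discrete Fourier transform of a vector supported on `Λ`. -/
def ftv (d : ℕ) (Λ : Finset (Fin d → ℤ)) (v : ↥Λ → ℂ) (k : Fin d → ℝ) : ℂ :=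
  ∑ x : ↥Λ, v x * ch d (-(x : Fin d → ℤ)) k

lemma continuous_ftv (d : ℕ) (Λ : Finset (Fin d → ℤ)) (v : ↥Λ → ℂ) :
    Continuous (ftv d Λ v) :=
  continuous_finset_sum _ fun x _ => continuous_const.mul (continuous_ch d _)

lemma conj_ftv_mul (d : ℕ) (Λ : Finset (Fin d → ℤ)) (v : ↥Λ → ℂ) (k : Fin d → ℝ) :
    conj (ftv d Λ v k) * ftv d Λ v k =
      ∑ x : ↥Λ, ∑ y : ↥Λ,
        conj (v x) * v y * ch d ((x : Fin d → ℤ) - (y : Fin d → ℤ)) k := by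
  simp only [ftv, map_sum, Finset.sum_mul, Finset.mul_sum]
  rw [Finset.sum_comm]
  refine Finset.sum_congr rfl fun x _ => Finset.sum_congr rfl fun y _ => ?_
  rw [map_mul, conj_ch, neg_neg, sub_eq_add_neg, ch_add]
  ring

lemma parseval (d : ℕ) (Λ : Finset (Fin d → ℤ)) (v : ↥Λ → ℂ) :
    ∫ k in box d, conj (ftv d Λ v k) * ftv d Λ v k =
      (((2 * Real.pi) ^ d : ℝ) : ℂ) * ∑ x : ↥Λ, conj (v x) * v x := by
  rw [MeasureTheory.setIntegral_congr_fun (measurableSet_box d)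
    (fun k _ => conj_ftv_mul d Λ v k)]
  have hterm : ∀ (x y : ↥Λ), IntegrableOn
      (fun k => conj (v x) * v y * ch d ((x : Fin d → ℤ) - (y : Fin d → ℤ)) k) (box d) volume :=
    fun x y => (integrableOn_box d (continuous_ch d _)).const_mul _
  rw [MeasureTheory.integral_finset_sum _ fun x _ =>
    MeasureTheory.integrable_finset_sum _ fun y _ => hterm x y]
  have hx : ∀ x : ↥Λ, (∫ k in box d, ∑ y : ↥Λ,
      conj (v x) * v y * ch d ((x : Fin d → ℤ) - (y : Fin d → ℤ)) k)
      = conj (v x) * v x * (((2 * Real.pi) ^ d : ℝ) : ℂ) := by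
    intro x
    rw [MeasureTheory.integral_finset_sum _ fun y _ => hterm x y]
    have hy : ∀ y : ↥Λ, (∫ k in box d,
        conj (v x) * v y * ch d ((x : Fin d → ℤ) - (y : Fin d → ℤ)) k)
        = conj (v x) * v y *
          (if (x : Fin d → ℤ) - (y : Fin d → ℤ) = 0 then (((2 * Real.pi) ^ d : ℝ) : ℂ) else 0) := by
      intro y
      rw [MeasureTheory.integral_const_mul, integral_ch]
    rw [Finset.sum_congr rfl fun y _ => hy y]
    rw [Finset.sum_eq_single x]
    · rw [if_pos (sub_self _)]
    · intro y _ hyx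
      rw [if_neg, mul_zero]
      intro hc
      rw [sub_eq_zero] at hc
      exact hyx (Subtype.ext hc.symm)
    · intro h; exact absurd (Finset.mem_univ x) h
  rw [Finset.sum_congr rfl fun x _ => hx x, ← Finset.sum_mul]
  ring

lemma energy (d : ℕ) (Λ : Finset (Fin d → ℤ)) (v : ↥Λ → ℂ) :
    ∫ k in box d, (epsk d k : ℂ) * (conj (ftv d Λ v k) * ftv d Λ v k) =
      (((2 * Real.pi) ^ d : ℝ) : ℂ) *
        ∑ x : ↥Λ, ∑ y : ↥Λ, conj (v x) * lapMatrix d Λ x y * v y := by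
  have hpt : ∀ k, (epsk d k : ℂ) * (conj (ftv d Λ v k) * ftv d Λ v k) =
      ∑ x : ↥Λ, ∑ y : ↥Λ, conj (v x) * v y *
        ((epsk d k : ℂ) * ch d ((x : Fin d → ℤ) - (y : Fin d → ℤ)) k) := by
    intro k
    rw [conj_ftv_mul, Finset.mul_sum]
    refine Finset.sum_congr rfl fun x _ => ?_
    rw [Finset.mul_sum]
    exact Finset.sum_congr rfl fun y _ => by ring
  rw [MeasureTheory.setIntegral_congr_fun (measurableSet_box d) fun k _ => hpt k]
  have hterm : ∀ (x y : ↥Λ), IntegrableOn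
      (fun k => conj (v x) * v y *
        ((epsk d k : ℂ) * ch d ((x : Fin d → ℤ) - (y : Fin d → ℤ)) k)) (box d) volume :=
    fun x y => (integrableOn_box d
      (((Complex.continuous_ofReal.comp (continuous_epsk d)).mul (continuous_ch d _)))).const_mul _
  rw [MeasureTheory.integral_finset_sum _ fun x _ =>
    MeasureTheory.integrable_finset_sum _ fun y _ => hterm x y]
  rw [Finset.mul_sum]
  refine Finset.sum_congr rfl fun x _ => ?_
  rw [MeasureTheory.integral_finset_sum _ fun y _ => hterm x y, Finset.mul_sum]
  refine Finset.sum_congr rfl fun y _ => ?_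
  rw [MeasureTheory.integral_const_mul, integral_eps_ch, cM_eq_lap]
  ring

/-- The orthonormal eigenvector family of the discrete Laplacian. -/
def evec (d : ℕ) (Λ : Finset (Fin d → ℤ)) (x : ↥Λ) : ↥Λ → ℂ :=
  ⇑((lapMatrix_isHermitian d Λ).eigenvectorBasis x)

lemma norm_evec (d : ℕ) (Λ : Finset (Fin d → ℤ)) (x : ↥Λ) :
    ∑ p : ↥Λ, conj (evec d Λ x p) * evec d Λ x p = 1 := by
  have h1 : (inner ℂ ((lapMatrix_isHermitian d Λ).eigenvectorBasis x)
      ((lapMatrix_isHermitian d Λ).eigenvectorBasis x) : ℂ)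
      = ∑ p : ↥Λ, conj (evec d Λ x p) * evec d Λ x p := by
    rw [PiLp.inner_apply]
    exact Finset.sum_congr rfl fun p _ => by rw [RCLike.inner_apply]; exact mul_comm _ _
  rw [← h1, @inner_self_eq_norm_sq_to_K ℂ,
    (lapMatrix_isHermitian d Λ).eigenvectorBasis.orthonormal.1 x]
  norm_num

lemma quad_eig (d : ℕ) (Λ : Finset (Fin d → ℤ)) (x : ↥Λ) :
    ∑ p : ↥Λ, ∑ q : ↥Λ, conj (evec d Λ x p) * lapMatrix d Λ p q * evec d Λ x q
      = ((lapMatrix_isHermitian d Λ).eigenvalues x : ℂ) := by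
  have key : ∀ p : ↥Λ, ∑ q : ↥Λ, conj (evec d Λ x p) * lapMatrix d Λ p q * evec d Λ x q
      = ((lapMatrix_isHermitian d Λ).eigenvalues x : ℂ) *
        (conj (evec d Λ x p) * evec d Λ x p) := by
    intro p
    have h := congrFun ((lapMatrix_isHermitian d Λ).mulVec_eigenvectorBasis x) p
    simp only [Matrix.mulVec, dotProduct, Pi.smul_apply, Complex.real_smul] at h
    calc ∑ q : ↥Λ, conj (evec d Λ x p) * lapMatrix d Λ p q * evec d Λ x q
        = conj (evec d Λ x p) * ∑ q : ↥Λ, lapMatrix d Λ p q * evec d Λ x q := by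
          rw [Finset.mul_sum]; exact Finset.sum_congr rfl fun q _ => by ring
      _ = _ := by
          rw [show (∑ q : ↥Λ, lapMatrix d Λ p q * evec d Λ x q)
            = ((lapMatrix_isHermitian d Λ).eigenvalues x : ℂ) * evec d Λ x p from h]
          ring
  rw [Finset.sum_congr rfl fun p _ => key p, ← Finset.mul_sum, norm_evec, mul_one]

/-- The occupation function `M(k)`. -/
def Mfun (d : ℕ) (Λ : Finset (Fin d → ℤ)) (T : Finset ↥Λ) (k : Fin d → ℝ) : ℝ :=
  ∑ x ∈ T, ‖ftv d Λ (evec d Λ x) k‖ ^ 2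

lemma Mfun_nonneg (d : ℕ) (Λ : Finset (Fin d → ℤ)) (T : Finset ↥Λ) (k : Fin d → ℝ) :
    0 ≤ Mfun d Λ T k :=
  Finset.sum_nonneg fun x _ => by positivity

lemma continuous_Mfun (d : ℕ) (Λ : Finset (Fin d → ℤ)) (T : Finset ↥Λ) :
    Continuous (Mfun d Λ T) :=
  continuous_finset_sum _ fun x _ => ((continuous_ftv d Λ (evec d Λ x)).norm).pow 2

lemma Mfun_le (d : ℕ) (Λ : Finset (Fin d → ℤ)) (T : Finset ↥Λ) (k : Fin d → ℝ) :
    Mfun d Λ T k ≤ (Λ.card : ℝ) := by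
  classical
  set ek : EuclideanSpace ℂ ↥Λ := WithLp.toLp 2 (fun p : ↥Λ => ch d (p : Fin d → ℤ) k) with hek
  have hinner : ∀ x : ↥Λ,
      (inner ℂ ek ((lapMatrix_isHermitian d Λ).eigenvectorBasis x) : ℂ)
        = ftv d Λ (evec d Λ x) k := by
    intro x
    rw [PiLp.inner_apply, ftv]
    refine Finset.sum_congr rfl fun p _ => ?_
    rw [RCLike.inner_apply]
    show evec d Λ x p * conj (ch d (p : Fin d → ℤ) k) = _
    rw [conj_ch]
  have hb := ((lapMatrix_isHermitian d Λ).eigenvectorBasis.orthonormal).sum_inner_products_le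
    (s := T) ek
  have hsw : ∀ x : ↥Λ, ‖(inner ℂ ((lapMatrix_isHermitian d Λ).eigenvectorBasis x) ek : ℂ)‖
      = ‖ftv d Λ (evec d Λ x) k‖ := by
    intro x
    rw [← norm_inner_symm, hinner]
  have hM : Mfun d Λ T k ≤ ‖ek‖ ^ 2 := by
    rw [Mfun]
    calc ∑ x ∈ T, ‖ftv d Λ (evec d Λ x) k‖ ^ 2
        = ∑ x ∈ T, ‖(inner ℂ ((lapMatrix_isHermitian d Λ).eigenvectorBasis x) ek : ℂ)‖ ^ 2 :=
          Finset.sum_congr rfl fun x _ => by rw [hsw]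
      _ ≤ ‖ek‖ ^ 2 := hb
  refine hM.trans ?_
  have hnorm : ‖ek‖ ^ 2 = (Λ.card : ℝ) := by
    rw [EuclideanSpace.norm_eq, Real.sq_sqrt (Finset.sum_nonneg fun p _ => by positivity)]
    have : ∀ p : ↥Λ, ‖ek p‖ ^ 2 = 1 := by
      intro p
      show ‖ch d (p : Fin d → ℤ) k‖ ^ 2 = 1
      rw [norm_ch]; norm_num
    rw [Finset.sum_congr rfl fun p _ => this p]
    simp [Finset.card_univ]
  rw [hnorm]

lemma norm_sq_eq_re_conj_mul (z : ℂ) : ‖z‖ ^ 2 = (conj z * z).re := by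
  rw [mul_comm, Complex.mul_conj]
  rw [Complex.sq_norm]
  simp

lemma integrableOn_conj_ftv_mul (d : ℕ) (Λ : Finset (Fin d → ℤ)) (v : ↥Λ → ℂ) :
    IntegrableOn (fun k => conj (ftv d Λ v k) * ftv d Λ v k) (box d) volume :=
  integrableOn_box d ((Complex.continuous_conj.comp (continuous_ftv d Λ v)).mul
    (continuous_ftv d Λ v))

lemma integral_Mfun (d : ℕ) (Λ : Finset (Fin d → ℤ)) (T : Finset ↥Λ) :
    ∫ k in box d, Mfun d Λ T k = (2 * Real.pi) ^ d * T.card := by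
  simp only [Mfun]
  rw [MeasureTheory.integral_finset_sum _ fun x _ =>
    integrableOn_box d (f := fun k => ‖ftv d Λ (evec d Λ x) k‖ ^ 2) ((continuous_ftv d Λ (evec d Λ x)).norm.pow 2)]
  have hx : ∀ x : ↥Λ, (∫ k in box d, ‖ftv d Λ (evec d Λ x) k‖ ^ 2)
      = (2 * Real.pi) ^ d := by
    intro x
    have h1 : (∫ k in box d, ‖ftv d Λ (evec d Λ x) k‖ ^ 2)
        = ∫ k in box d, (conj (ftv d Λ (evec d Λ x) k) * ftv d Λ (evec d Λ x) k).re :=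
      MeasureTheory.setIntegral_congr_fun (measurableSet_box d)
        fun k _ => norm_sq_eq_re_conj_mul _
    rw [h1]
    have h2 := integral_re (𝕜 := ℂ) (integrableOn_conj_ftv_mul d Λ (evec d Λ x))
    simp only [RCLike.re_to_complex] at h2
    rw [h2, parseval, norm_evec, mul_one]
    norm_cast
  rw [Finset.sum_congr rfl fun x _ => hx x, Finset.sum_const, nsmul_eq_mul, mul_comm]

lemma integral_eps_Mfun (d : ℕ) (Λ : Finset (Fin d → ℤ)) (T : Finset ↥Λ) :
    ∫ k in box d, epsk d k * Mfun d Λ T k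
      = (2 * Real.pi) ^ d * ∑ x ∈ T, (lapMatrix_isHermitian d Λ).eigenvalues x := by
  have hpt : ∀ k, epsk d k * Mfun d Λ T k
      = ∑ x ∈ T, ((epsk d k : ℂ) * (conj (ftv d Λ (evec d Λ x) k)
          * ftv d Λ (evec d Λ x) k)).re := by
    intro k
    rw [Mfun, Finset.mul_sum]
    refine Finset.sum_congr rfl fun x _ => ?_
    rw [norm_sq_eq_re_conj_mul, ← Complex.re_ofReal_mul]
  rw [MeasureTheory.setIntegral_congr_fun (measurableSet_box d) fun k _ => hpt k]
  have hint : ∀ x : ↥Λ, IntegrableOn (fun k => (epsk d k : ℂ) *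
      (conj (ftv d Λ (evec d Λ x) k) * ftv d Λ (evec d Λ x) k)) (box d) volume :=
    fun x => integrableOn_box d ((Complex.continuous_ofReal.comp (continuous_epsk d)).mul
      ((Complex.continuous_conj.comp (continuous_ftv d Λ _)).mul (continuous_ftv d Λ _)))
  rw [MeasureTheory.integral_finset_sum (f := fun (x : ↥Λ) (k : Fin d → ℝ) =>
      ((epsk d k : ℂ) * (conj (ftv d Λ (evec d Λ x) k) * ftv d Λ (evec d Λ x) k)).re)
      T (fun x _ => (hint x).re)]
  have hx : ∀ x : ↥Λ, (∫ k in box d, ((epsk d k : ℂ) * (conj (ftv d Λ (evec d Λ x) k)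
      * ftv d Λ (evec d Λ x) k)).re)
      = (2 * Real.pi) ^ d * (lapMatrix_isHermitian d Λ).eigenvalues x := by
    intro x
    have h2 := integral_re (𝕜 := ℂ) (hint x)
    simp only [RCLike.re_to_complex] at h2
    rw [h2, energy, quad_eig d Λ x, ← Complex.ofReal_mul, Complex.ofReal_re]
  rw [Finset.sum_congr rfl fun x _ => hx x, ← Finset.mul_sum]


lemma exists_le_of_le_map {α β : Type*} [DecidableEq α] [DecidableEq β] (f : α → β) :
    ∀ (u : Multiset α) (m : Multiset β), m ≤ u.map f → ∃ v, v ≤ u ∧ v.map f = m := by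
  intro u
  induction u using Multiset.induction_on with
  | empty =>
    intro m hm
    rw [Multiset.map_zero, Multiset.le_zero] at hm
    exact ⟨0, le_rfl, by simp [hm]⟩
  | cons a u ih =>
    intro m hm
    rw [Multiset.map_cons] at hm
    by_cases hfa : f a ∈ m
    · obtain ⟨v, hv, hvm⟩ := ih (m.erase (f a)) (Multiset.erase_le_iff_le_cons.2 hm)
      refine ⟨a ::ₘ v, Multiset.cons_le_cons a hv, ?_⟩
      rw [Multiset.map_cons, hvm, Multiset.cons_erase hfa]
    · rw [Multiset.le_cons_of_notMem hfa] at hm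
      obtain ⟨v, hv, hvm⟩ := ih m hm
      exact ⟨v, le_trans hv (Multiset.le_cons_self u a), hvm⟩

lemma lowSum_eq_sum (d : ℕ) (Λ : Finset (Fin d → ℤ)) (N : ℕ) (hN : N ≤ Λ.card) :
    ∃ T : Finset ↥Λ, T.card = N ∧
      lowSum d Λ N = ∑ x ∈ T, (lapMatrix_isHermitian d Λ).eigenvalues x := by
  classical
  set f := (lapMatrix_isHermitian d Λ).eigenvalues with hf
  set l := Multiset.sort ((Finset.univ.val : Multiset ↥Λ).map f) (· ≤ ·) with hl
  have hle : ((l.take N : List ℝ) : Multiset ℝ) ≤ ((Finset.univ.val : Multiset ↥Λ).map f) := by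
    conv_rhs => rw [← Multiset.sort_eq ((Finset.univ.val : Multiset ↥Λ).map f) (· ≤ ·)]
    exact Multiset.coe_le.2 (List.take_sublist N l).subperm
  obtain ⟨v, hv, hvm⟩ := exists_le_of_le_map f Finset.univ.val _ hle
  have hnodup : v.Nodup := Multiset.nodup_of_le hv Finset.univ.nodup
  have hlen : l.length = Λ.card := by
    have h1 : l.length = Multiset.card ((Finset.univ.val : Multiset ↥Λ).map f) := by
      rw [hl, Multiset.length_sort]
    rw [h1, Multiset.card_map]
    show Finset.univ.card = Λ.card
    rw [Finset.card_univ, Fintype.card_coe]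
  refine ⟨⟨v, hnodup⟩, ?_, ?_⟩
  · have hcard : Multiset.card v = (l.take N).length := by
      have := congrArg Multiset.card hvm
      simpa using this
    show Multiset.card v = N
    rw [hcard, List.length_take, hlen]
    exact min_eq_left hN
  · show lowSum d Λ N = (v.map f).sum
    rw [hvm]
    rfl

lemma measurableSet_below (d : ℕ) (E : ℝ) :
    MeasurableSet {k : Fin d → ℝ | inBZ d k ∧ epsk d k < E} := by
  have h : {k : Fin d → ℝ | inBZ d k ∧ epsk d k < E}
      = box d ∩ epsk d ⁻¹' (Set.Iio E) := by
    ext k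
    simp [Set.mem_setOf_eq, inBZ_iff_mem_box, Set.mem_Iio, and_comm]
  rw [h]
  exact (measurableSet_box d).inter ((continuous_epsk d).measurable measurableSet_Iio)

lemma below_subset_box (d : ℕ) (E : ℝ) :
    {k : Fin d → ℝ | inBZ d k ∧ epsk d k < E} ⊆ box d :=
  fun k hk => (inBZ_iff_mem_box d k).1 hk.1

lemma volBelow_nonpos (d : ℕ) {E : ℝ} (hE : E ≤ 0) : volBelow d E = 0 := by
  have h : {k : Fin d → ℝ | inBZ d k ∧ epsk d k < E} = ∅ := by
    ext k
    simp only [Set.mem_setOf_eq, Set.mem_empty_iff_false, iff_false, not_and]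
    intro _
    have := epsk_nonneg d k
    linarith
  rw [volBelow, h]
  simp

lemma fermiSet_pos (d : ℕ) {ρ E : ℝ} (hρ : 0 < ρ)
    (hE : ρ ≤ volBelow d E / (2 * Real.pi) ^ d) : 0 < E := by
  by_contra h
  push_neg at h
  rw [volBelow_nonpos d h, zero_div] at hE
  linarith

lemma fermiLevel_nonneg (d : ℕ) {ρ : ℝ} (hρ : 0 < ρ) : 0 ≤ fermiLevel d ρ :=
  Real.sInf_nonneg fun _ hE => (fermiSet_pos d hρ hE).le

lemma bddBelow_fermiSet (d : ℕ) {ρ : ℝ} (hρ : 0 < ρ) :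
    BddBelow {E : ℝ | ρ ≤ volBelow d E / (2 * Real.pi) ^ d} :=
  ⟨0, fun _ hE => (fermiSet_pos d hρ hE).le⟩

lemma volBelow_fermiLevel_le (d : ℕ) {ρ : ℝ} (hρ : 0 < ρ) :
    volBelow d (fermiLevel d ρ) ≤ (2 * Real.pi) ^ d * ρ := by
  have hP : (0:ℝ) < (2 * Real.pi) ^ d := pow_pos (by positivity) d
  set μ := fermiLevel d ρ with hμ
  have hnot : ∀ E, E < μ → volBelow d E ≤ (2 * Real.pi) ^ d * ρ := by
    intro E hE
    have hEnot : ¬ ρ ≤ volBelow d E / (2 * Real.pi) ^ d := fun hc =>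
      absurd (csInf_le (bddBelow_fermiSet d hρ) hc) (not_le.2 hE)
    push_neg at hEnot
    have h2 := (div_lt_iff₀ hP).1 hEnot
    nlinarith
  set A : ℕ → Set (Fin d → ℝ) :=
    fun n => {k : Fin d → ℝ | inBZ d k ∧ epsk d k < μ - 1 / (n + 1)} with hA
  have hmono : Monotone A := by
    intro a b hab k hk
    refine ⟨hk.1, lt_of_lt_of_le hk.2 ?_⟩
    have hab' : (a:ℝ) ≤ b := Nat.cast_le.2 hab
    have h1 : (1:ℝ) / (b + 1) ≤ 1 / (a + 1) :=
      one_div_le_one_div_of_le (by positivity) (by linarith)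
    linarith
  have hU : {k : Fin d → ℝ | inBZ d k ∧ epsk d k < μ} = ⋃ n, A n := by
    ext k
    simp only [Set.mem_setOf_eq, Set.mem_iUnion, hA]
    constructor
    · rintro ⟨h1, h2⟩
      obtain ⟨n, hn⟩ := exists_nat_one_div_lt (sub_pos.2 h2)
      exact ⟨n, h1, by linarith⟩
    · rintro ⟨n, h1, h2⟩
      refine ⟨h1, lt_of_lt_of_le h2 ?_⟩
      have : (0:ℝ) < 1 / ((n:ℝ) + 1) := by positivity
      linarith
  have hsup : volume {k : Fin d → ℝ | inBZ d k ∧ epsk d k < μ} = ⨆ n, volume (A n) := by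
    rw [hU]
    exact (hmono.directed_le).measure_iUnion
  have hbound : ∀ n, volume (A n) ≤ ENNReal.ofReal ((2 * Real.pi) ^ d * ρ) := by
    intro n
    have hfin : volume (A n) ≠ ⊤ :=
      ne_of_lt (lt_of_le_of_lt (measure_mono (below_subset_box d _)) (volume_box_lt_top d))
    rw [ENNReal.le_ofReal_iff_toReal_le hfin (by positivity)]
    have h3 : (volume (A n)).toReal = volBelow d (μ - 1 / (n + 1)) := rfl
    rw [h3]
    apply hnot
    have : (0:ℝ) < 1 / ((n:ℝ) + 1) := by positivity
    linarith
  have hle : volume {k : Fin d → ℝ | inBZ d k ∧ epsk d k < μ}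
      ≤ ENNReal.ofReal ((2 * Real.pi) ^ d * ρ) := by
    rw [hsup]
    exact iSup_le hbound
  exact ENNReal.toReal_le_of_le_ofReal (by positivity) hle

lemma fermiLevel_zero_nonpos (d : ℕ) : fermiLevel d 0 ≤ 0 := by
  rw [fermiLevel]
  by_cases hb : BddBelow {E : ℝ | (0:ℝ) ≤ volBelow d E / (2 * Real.pi) ^ d}
  · have hmem : (-1:ℝ) ∈ {E : ℝ | (0:ℝ) ≤ volBelow d E / (2 * Real.pi) ^ d} := by
      have : (0:ℝ) ≤ volBelow d (-1) := ENNReal.toReal_nonneg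
      have hP : (0:ℝ) < (2 * Real.pi) ^ d := pow_pos (by positivity) d
      exact div_nonneg this hP.le
    have := csInf_le hb hmem
    linarith
  · rw [Real.sInf_of_not_bddBelow hb]


end LowSumAux

end Aux

/-- For every `d ≥ 1`, every finite nonempty `Λ ⊂ ℤ^d` and `0 ≤ N ≤ |Λ|`,
the sum of the `N` lowest eigenvalues satisfies `S_{Λ,N} ≥ e(N/|Λ|)·|Λ|`. -/
theorem lowSum_ge_bulk (d : ℕ) (hd : 1 ≤ d) (Λ : Finset (Fin d → ℤ))
    (hΛ : Λ.Nonempty) (N : ℕ) (hN : N ≤ Λ.card) :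
    lowSum d Λ N ≥ enGS d ((N : ℝ) / Λ.card) * Λ.card := by
  classical
  open MeasureTheory LowSumAux in
  rcases Nat.eq_zero_or_pos N with hN0 | hNpos
  · subst hN0
    have hlow : lowSum d Λ 0 = 0 := by simp [lowSum]
    simp only [Nat.cast_zero, zero_div]
    have hempty : {k : Fin d → ℝ | inBZ d k ∧ epsk d k < fermiLevel d 0} = ∅ := by
      ext k
      simp only [Set.mem_setOf_eq, Set.mem_empty_iff_false, iff_false, not_and]
      intro _
      have h1 := epsk_nonneg d k
      have h2 := fermiLevel_zero_nonpos d
      linarith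
    have hen : enGS d 0 = 0 := by
      rw [enGS, hempty]
      simp
    rw [hlow, hen, zero_mul]
  · obtain ⟨T, hTcard, hTsum⟩ := lowSum_eq_sum d Λ N hN
    set ρ : ℝ := (N : ℝ) / Λ.card with hρdef
    have hL : (0:ℝ) < Λ.card := by exact_mod_cast Finset.card_pos.2 hΛ
    have hρpos : 0 < ρ := div_pos (by exact_mod_cast hNpos) hL
    set μ := fermiLevel d ρ with hμdef
    have hμ0 : 0 ≤ μ := fermiLevel_nonneg d hρpos
    have hP : (0:ℝ) < (2 * Real.pi) ^ d := pow_pos (by positivity) d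
    set F := {k : Fin d → ℝ | inBZ d k ∧ epsk d k < μ} with hF
    have hFsub : F ⊆ box d := below_subset_box d μ
    have hFmeas : MeasurableSet F := measurableSet_below d μ
    have hFfin : volume F < ⊤ :=
      lt_of_le_of_lt (measure_mono hFsub) (volume_box_lt_top d)
    have hiM : IntegrableOn (Mfun d Λ T) (box d) volume :=
      integrableOn_box d (continuous_Mfun d Λ T)
    have hiEM : IntegrableOn (fun k => epsk d k * Mfun d Λ T k) (box d) volume :=
      integrableOn_box d ((continuous_epsk d).mul (continuous_Mfun d Λ T))
    have hiE_F : IntegrableOn (fun k => epsk d k) F volume :=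
      (integrableOn_box d (continuous_epsk d)).mono_set hFsub
    have hiC_F : IntegrableOn (fun _ => μ) F volume :=
      integrableOn_const hFfin.ne
    have hiInd : IntegrableOn (F.indicator fun k => (epsk d k - μ) * Λ.card) (box d) volume := by
      refine Integrable.integrableOn ?_
      refine IntegrableOn.integrable_indicator ?_ hFmeas
      exact (hiE_F.sub hiC_F).mul_const _
    have hiSub : IntegrableOn (fun k => (epsk d k - μ) * Mfun d Λ T k) (box d) volume :=
      integrableOn_box d (((continuous_epsk d).sub continuous_const).mul (continuous_Mfun d Λ T))
    have hcomp : (∫ k in box d, F.indicator (fun k => (epsk d k - μ) * Λ.card) k)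
        ≤ ∫ k in box d, (epsk d k - μ) * Mfun d Λ T k := by
      refine setIntegral_mono_on hiInd hiSub (measurableSet_box d) ?_
      intro k hk
      by_cases hkF : k ∈ F
      · rw [Set.indicator_of_mem hkF]
        have h1 : epsk d k - μ ≤ 0 := by
          have := hkF.2
          linarith [hkF.2]
        exact mul_le_mul_of_nonpos_left (Mfun_le d Λ T k) h1
      · rw [Set.indicator_of_notMem hkF]
        apply mul_nonneg
        · have hin : inBZ d k := (inBZ_iff_mem_box d k).2 hk
          have hnl : ¬ epsk d k < μ := fun hc => hkF ⟨hin, hc⟩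
          linarith [not_lt.1 hnl]
        · exact Mfun_nonneg d Λ T k
    have hEnF : (∫ k in F, epsk d k) = (2 * Real.pi) ^ d * enGS d ρ := by
      rw [enGS]
      field_simp
      rfl
    have hLHS : (∫ k in box d, F.indicator (fun k => (epsk d k - μ) * Λ.card) k)
        = ((2 * Real.pi) ^ d * enGS d ρ - μ * volBelow d μ) * Λ.card := by
      rw [MeasureTheory.setIntegral_indicator hFmeas,
        Set.inter_eq_self_of_subset_right hFsub]
      rw [MeasureTheory.integral_mul_const]
      rw [MeasureTheory.integral_sub hiE_F hiC_F, MeasureTheory.setIntegral_const, hEnF]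
      have hvolF : volume.real F = volBelow d μ := rfl
      rw [hvolF, smul_eq_mul]
      ring
    have hRHS : (∫ k in box d, (epsk d k - μ) * Mfun d Λ T k)
        = (2 * Real.pi) ^ d * lowSum d Λ N - μ * ((2 * Real.pi) ^ d * N) := by
      have hpt : ∀ k, (epsk d k - μ) * Mfun d Λ T k
          = epsk d k * Mfun d Λ T k - μ * Mfun d Λ T k := fun k => by ring
      rw [MeasureTheory.setIntegral_congr_fun (measurableSet_box d) fun k _ => hpt k]
      rw [MeasureTheory.integral_sub hiEM (hiM.const_mul μ)]
      rw [MeasureTheory.integral_const_mul, integral_eps_Mfun, integral_Mfun, hTcard, ← hTsum]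
    have hvol : volBelow d μ ≤ (2 * Real.pi) ^ d * ρ := volBelow_fermiLevel_le d hρpos
    have hρL : ρ * Λ.card = N := div_mul_cancel₀ _ (ne_of_gt hL)
    rw [hLHS, hRHS] at hcomp
    have h1 : volBelow d μ * Λ.card ≤ (2 * Real.pi) ^ d * N := by
      have := mul_le_mul_of_nonneg_right hvol hL.le
      calc volBelow d μ * Λ.card ≤ (2 * Real.pi) ^ d * ρ * Λ.card := this
        _ = (2 * Real.pi) ^ d * N := by rw [mul_assoc, hρL]
    have h2 : 0 ≤ μ * ((2 * Real.pi) ^ d * N - volBelow d μ * Λ.card) :=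
      mul_nonneg hμ0 (by linarith)
    have key : (2 * Real.pi) ^ d * (enGS d ρ * Λ.card) ≤ (2 * Real.pi) ^ d * lowSum d Λ N := by
      nlinarith [hcomp, h2]
    exact (mul_le_mul_iff_right₀ hP).1 key
end

section
/- For every integer d ≥ 1, every finite nonempty Λ ⊂ ℤ^d, and every k ∈ [−π,π]^d, the boundary vector b_k satisfies ‖b_k‖² ≤ 2d·B(Λ); moreover, if |k|_∞ ≤ π/4 then ‖b_k‖² ≥ B(Λ). -/
open scoped BigOperators

noncomputable section

/-- `∂Λ`: sites of `Λ` having a nearest neighbor outside `Λ`. -/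
def bdry (d : ℕ) (Λ : Finset (Fin d → ℤ)) : Finset (Fin d → ℤ) :=
  Λ.filter fun x => ∃ p : Fin d × Bool, x + unitVec d p ∉ Λ

/-- The boundary vector
`b_k(x) = χ_{∂Λ}(x)·e^{−i k·x}·Σ_{e : x+e ∉ Λ} e^{−i k·e}` (it vanishes outside `∂Λ`,
since the sum over outward unit vectors is then empty). -/
def bk (d : ℕ) (Λ : Finset (Fin d → ℤ)) (k : Fin d → ℝ) (x : Fin d → ℤ) : ℂ :=
  if x ∈ Λ then
    Complex.exp (-Complex.I * ∑ i, (k i : ℂ) * ((x i : ℤ) : ℂ)) *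
      ∑ p ∈ Finset.univ.filter (fun p : Fin d × Bool => x + unitVec d p ∉ Λ),
        Complex.exp (-Complex.I * (if p.2 then (k p.1 : ℂ) else -(k p.1 : ℂ)))
  else 0

/-- The discrete Laplacian `h_Λ` acting on functions extended by zero outside `Λ`:
`(h_Λ φ)(x) = −Σ_{y∈Λ, |y−x|₁=1} φ(y) + 2d·φ(x)`. -/
def lapAct (d : ℕ) (Λ : Finset (Fin d → ℤ)) (φ : (Fin d → ℤ) → ℂ) (x : Fin d → ℤ) : ℂ :=
  -∑ y ∈ Λ.filter (fun y => dist1 d x y = 1), φ y + 2 * d * φ x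

private lemma exp_neg_I_real' (θ : ℝ) :
    Complex.exp (-Complex.I * θ) = (Real.cos θ : ℂ) - Real.sin θ * Complex.I := by
  have h : -Complex.I * θ = ((-θ : ℝ) : ℂ) * Complex.I := by push_cast; ring
  rw [h, Complex.exp_mul_I]
  push_cast
  simp [Complex.cos_neg, Complex.sin_neg, ← Complex.ofReal_cos, ← Complex.ofReal_sin]
  ring

private lemma bk_sq' (d : ℕ) (Λ : Finset (Fin d → ℤ)) (k : Fin d → ℝ)
    (x : Fin d → ℤ) (hx : x ∈ Λ) :
    ‖bk d Λ k x‖ ^ 2 =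
      ∑ p ∈ Finset.univ.filter (fun p : Fin d × Bool => x + unitVec d p ∉ Λ),
        ∑ q ∈ Finset.univ.filter (fun q : Fin d × Bool => x + unitVec d q ∉ Λ),
          Real.cos ((if p.2 then k p.1 else -k p.1) - (if q.2 then k q.1 else -k q.1)) := by
  set S := Finset.univ.filter (fun p : Fin d × Bool => x + unitVec d p ∉ Λ) with hS
  set θ : Fin d × Bool → ℝ := fun p => if p.2 then k p.1 else -k p.1 with hθ
  have h1 : bk d Λ k x = Complex.exp (-Complex.I * ∑ i, (k i : ℂ) * ((x i : ℤ) : ℂ)) *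
      ∑ p ∈ S, ((Real.cos (θ p) : ℂ) - Real.sin (θ p) * Complex.I) := by
    rw [bk, if_pos hx]
    congr 1
    refine Finset.sum_congr rfl fun p _ => ?_
    rw [← exp_neg_I_real']
    congr 1
    simp [hθ]
    split <;> simp
  have habs1 : ‖Complex.exp (-Complex.I * ∑ i, (k i : ℂ) * ((x i : ℤ) : ℂ))‖ = 1 := by
    have : (∑ i, (k i : ℂ) * ((x i : ℤ) : ℂ)) = ((∑ i, k i * (x i : ℝ) : ℝ) : ℂ) := by
      push_cast; ring
    rw [this, Complex.norm_exp]
    simp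
  have h2 : ‖bk d Λ k x‖ ^ 2 =
      ‖∑ p ∈ S, ((Real.cos (θ p) : ℂ) - Real.sin (θ p) * Complex.I)‖ ^ 2 := by
    rw [h1, norm_mul, habs1, one_mul]
  rw [h2]
  have h3 : (∑ p ∈ S, ((Real.cos (θ p) : ℂ) - Real.sin (θ p) * Complex.I)) =
      ((∑ p ∈ S, Real.cos (θ p) : ℝ) : ℂ) - ((∑ p ∈ S, Real.sin (θ p) : ℝ) : ℂ) * Complex.I := by
    rw [Finset.sum_sub_distrib]
    push_cast
    rw [Finset.sum_mul]
  rw [h3, Complex.sq_norm, Complex.normSq_apply]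
  simp only [Complex.sub_re, Complex.sub_im, Complex.ofReal_re, Complex.ofReal_im,
    Complex.mul_re, Complex.mul_im, Complex.I_re, Complex.I_im]
  ring_nf
  show (∑ p ∈ S, Real.cos (θ p)) ^ 2 + (∑ p ∈ S, Real.sin (θ p)) ^ 2 =
      ∑ p ∈ S, ∑ q ∈ S, Real.cos (θ p - θ q)
  rw [sq, sq, Finset.sum_mul_sum, Finset.sum_mul_sum, ← Finset.sum_add_distrib]
  refine Finset.sum_congr rfl fun p _ => ?_
  rw [← Finset.sum_add_distrib]
  refine Finset.sum_congr rfl fun q _ => ?_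
  rw [Real.cos_sub]

/-- For every `k ∈ [−π,π]^d` the boundary vector satisfies `‖b_k‖² ≤ 2d·B(Λ)`;
moreover if `|k|_∞ ≤ π/4` then `‖b_k‖² ≥ B(Λ)`. -/
theorem bk_normSq_bounds (d : ℕ) (hd : 1 ≤ d) (Λ : Finset (Fin d → ℤ))
    (hΛ : Λ.Nonempty) (k : Fin d → ℝ) (hk : ∀ i, |k i| ≤ Real.pi) :
    (∑ x ∈ Λ, ‖bk d Λ k x‖ ^ 2 ≤ 2 * d * bonds d Λ) ∧
    ((∀ i, |k i| ≤ Real.pi / 4) →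
      (bonds d Λ : ℝ) ≤ ∑ x ∈ Λ, ‖bk d Λ k x‖ ^ 2) := by
  have hcard : ∀ x : Fin d → ℤ,
      ((Finset.univ.filter fun p : Fin d × Bool => x + unitVec d p ∉ Λ).card : ℝ) ≤ 2 * d := by
    intro x
    have h1 : (Finset.univ.filter fun p : Fin d × Bool => x + unitVec d p ∉ Λ).card ≤
        Fintype.card (Fin d × Bool) := by
      exact le_trans (Finset.card_filter_le _ _) (by rw [Finset.card_univ])
    have h2 : Fintype.card (Fin d × Bool) = 2 * d := by
      simp [Fintype.card_prod]; ring
    calc ((Finset.univ.filter fun p : Fin d × Bool => x + unitVec d p ∉ Λ).card : ℝ)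
        ≤ (Fintype.card (Fin d × Bool) : ℝ) := by exact_mod_cast h1
      _ = 2 * d := by rw [h2]; push_cast; ring
  constructor
  · -- upper bound
    have hb : (2 * (d : ℝ) * (bonds d Λ : ℝ)) =
        ∑ x ∈ Λ, 2 * (d : ℝ) *
          ((Finset.univ.filter fun p : Fin d × Bool => x + unitVec d p ∉ Λ).card : ℝ) := by
      rw [bonds]
      push_cast
      rw [Finset.mul_sum]
    rw [hb]
    refine Finset.sum_le_sum fun x hx => ?_
    rw [bk_sq' d Λ k x hx]
    set S := Finset.univ.filter (fun p : Fin d × Bool => x + unitVec d p ∉ Λ) with hS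
    calc ∑ p ∈ S, ∑ q ∈ S,
          Real.cos ((if p.2 then k p.1 else -k p.1) - (if q.2 then k q.1 else -k q.1))
        ≤ ∑ p ∈ S, (2 * (d : ℝ)) := by
          refine Finset.sum_le_sum fun p _ => ?_
          calc (∑ q ∈ S,
              Real.cos ((if p.2 then k p.1 else -k p.1) - (if q.2 then k q.1 else -k q.1)))
              ≤ ∑ q ∈ S, 1 := Finset.sum_le_sum fun q _ => Real.cos_le_one _
            _ = (S.card : ℝ) := by rw [Finset.sum_const]; simp
            _ ≤ 2 * d := hcard x
      _ = (S.card : ℝ) * (2 * d) := by rw [Finset.sum_const]; simp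
      _ = 2 * (d : ℝ) * (S.card : ℝ) := by ring
  · -- lower bound
    intro hk4
    have hθ : ∀ p : Fin d × Bool, |(if p.2 then k p.1 else -k p.1)| ≤ Real.pi / 4 := by
      intro p
      rcases p.2 <;> simp <;> [skip; skip] <;> first | exact hk4 p.1
    have hθ' : ∀ p : Fin d × Bool, |(if p.2 then k p.1 else -k p.1)| ≤ Real.pi / 4 := hθ
    have hb : (bonds d Λ : ℝ) =
        ∑ x ∈ Λ, ((Finset.univ.filter fun p : Fin d × Bool => x + unitVec d p ∉ Λ).card : ℝ) := by
      rw [bonds]; push_cast; rfl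
    rw [hb]
    refine Finset.sum_le_sum fun x hx => ?_
    rw [bk_sq' d Λ k x hx]
    set S := Finset.univ.filter (fun p : Fin d × Bool => x + unitVec d p ∉ Λ) with hS
    have hnn : ∀ p ∈ S, ∀ q ∈ S, (0:ℝ) ≤
        Real.cos ((if p.2 then k p.1 else -k p.1) - (if q.2 then k q.1 else -k q.1)) := by
      intro p _ q _
      apply Real.cos_nonneg_of_mem_Icc
      constructor
      · have := abs_sub (if p.2 then k p.1 else -k p.1) (if q.2 then k q.1 else -k q.1)
        have h1 := hθ p; have h2 := hθ q
        have habs : |(if p.2 then k p.1 else -k p.1) - (if q.2 then k q.1 else -k q.1)| ≤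
            Real.pi / 2 := by
          calc |(if p.2 then k p.1 else -k p.1) - (if q.2 then k q.1 else -k q.1)|
              ≤ |(if p.2 then k p.1 else -k p.1)| + |(if q.2 then k q.1 else -k q.1)| :=
                abs_sub _ _
            _ ≤ Real.pi / 4 + Real.pi / 4 := add_le_add h1 h2
            _ = Real.pi / 2 := by ring
        linarith [neg_abs_le ((if p.2 then k p.1 else -k p.1) - (if q.2 then k q.1 else -k q.1)),
          habs]
      · have h1 := hθ p; have h2 := hθ q
        have habs : |(if p.2 then k p.1 else -k p.1) - (if q.2 then k q.1 else -k q.1)| ≤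
            Real.pi / 2 := by
          calc |(if p.2 then k p.1 else -k p.1) - (if q.2 then k q.1 else -k q.1)|
              ≤ |(if p.2 then k p.1 else -k p.1)| + |(if q.2 then k q.1 else -k q.1)| :=
                abs_sub _ _
            _ ≤ Real.pi / 4 + Real.pi / 4 := add_le_add h1 h2
            _ = Real.pi / 2 := by ring
        linarith [le_abs_self ((if p.2 then k p.1 else -k p.1) - (if q.2 then k q.1 else -k q.1)),
          habs]
    calc ((S.card : ℝ))
        = ∑ p ∈ S, (1:ℝ) := by rw [Finset.sum_const]; simp
      _ ≤ ∑ p ∈ S, ∑ q ∈ S,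
          Real.cos ((if p.2 then k p.1 else -k p.1) - (if q.2 then k q.1 else -k q.1)) := by
          refine Finset.sum_le_sum fun p hp => ?_
          have hone : Real.cos ((if p.2 then k p.1 else -k p.1) -
              (if p.2 then k p.1 else -k p.1)) = 1 := by simp
          calc (1:ℝ) = Real.cos ((if p.2 then k p.1 else -k p.1) -
              (if p.2 then k p.1 else -k p.1)) := hone.symm
            _ ≤ ∑ q ∈ S, Real.cos ((if p.2 then k p.1 else -k p.1) -
                (if q.2 then k q.1 else -k q.1)) :=
              Finset.single_le_sum (fun q hq => hnn p hp q hq) hp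

end
end

section
/- For every integer d ≥ 1, every finite nonempty Λ ⊂ ℤ^d, and every φ ∈ ℓ²(Λ) supported on ∂Λ, one has ‖h_Λ φ‖² ≤ 4d·(φ, h_Λ φ) − 2d·‖φ‖². -/
open scoped BigOperators

noncomputable section

lemma dist1_comm (d : ℕ) (x y : Fin d → ℤ) : dist1 d x y = dist1 d y x :=
  Finset.sum_congr rfl fun i _ => by rw [← Int.natAbs_neg, neg_sub]

lemma exists_unitVec {d : ℕ} {x y : Fin d → ℤ} (h : dist1 d x y = 1) :
    ∃ p : Fin d × Bool, y = x + unitVec d p := by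
  unfold dist1 at h
  have hne : ∃ i, (x i - y i).natAbs ≠ 0 := by
    by_contra hc
    push_neg at hc
    simp [hc] at h
  obtain ⟨i₀, hi₀⟩ := hne
  have hle : (x i₀ - y i₀).natAbs ≤ 1 := h ▸ Finset.single_le_sum
    (f := fun i => (x i - y i).natAbs) (fun i _ => Nat.zero_le _) (Finset.mem_univ i₀)
  have h1 : (x i₀ - y i₀).natAbs = 1 := le_antisymm hle (Nat.one_le_iff_ne_zero.2 hi₀)
  have hsum := Finset.add_sum_erase Finset.univ (fun i => (x i - y i).natAbs) (Finset.mem_univ i₀)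
  rw [h] at hsum
  have hrest : ∀ j, j ≠ i₀ → x j = y j := by
    intro j hj
    have h0 : ∑ i ∈ Finset.univ.erase i₀, (x i - y i).natAbs = 0 := by omega
    have := (Finset.sum_eq_zero_iff.mp h0) j (Finset.mem_erase.mpr ⟨hj, Finset.mem_univ j⟩)
    omega
  rcases Int.natAbs_eq_iff.mp h1 with hc | hc
  · refine ⟨(i₀, false), funext fun j => ?_⟩
    show y j = x j + (if j = i₀ then (-1 : ℤ) else 0)
    by_cases hj : j = i₀
    · subst hj; simp; omega
    · simp [hj]; exact (hrest j hj).symm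
  · refine ⟨(i₀, true), funext fun j => ?_⟩
    show y j = x j + (if j = i₀ then (1 : ℤ) else 0)
    by_cases hj : j = i₀
    · subst hj; simp; omega
    · simp [hj]; exact (hrest j hj).symm

lemma card_nbr_le {d : ℕ} (hd : 1 ≤ d) (x : Fin d → ℤ) (F : Finset (Fin d → ℤ))
    (hF : ∀ y ∈ F, dist1 d x y = 1) : F.card ≤ 2 * d := by
  have : Nonempty (Fin d × Bool) := ⟨(⟨0, hd⟩, true)⟩
  classical
  set f : (Fin d → ℤ) → Fin d × Bool := fun y =>
    if h : ∃ p : Fin d × Bool, y = x + unitVec d p then h.choose else Classical.arbitrary _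
  have hspec : ∀ y ∈ F, y = x + unitVec d (f y) := by
    intro y hy
    have h := exists_unitVec (hF y hy)
    simp only [f, dif_pos h]
    exact h.choose_spec
  have := Finset.card_le_card_of_injOn f (fun y _ => Finset.mem_univ (f y))
    (fun y1 h1 y2 h2 he => by rw [hspec y1 h1, hspec y2 h2, he])
  simpa [Finset.card_univ, mul_comm] using this

lemma card_nbr_bdry {d : ℕ} (hd : 1 ≤ d) {Λ : Finset (Fin d → ℤ)} {y : Fin d → ℤ}
    (hy : y ∈ bdry d Λ) :
    (Λ.filter fun x => dist1 d x y = 1).card + 1 ≤ 2 * d := by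
  classical
  have : Nonempty (Fin d × Bool) := ⟨(⟨0, hd⟩, true)⟩
  obtain ⟨hyΛ, p₀, hp₀⟩ : y ∈ Λ ∧ ∃ p, y + unitVec d p ∉ Λ := Finset.mem_filter.mp hy
  set F := Λ.filter fun x => dist1 d x y = 1 with hF
  set f : (Fin d → ℤ) → Fin d × Bool := fun x =>
    if h : ∃ p : Fin d × Bool, x = y + unitVec d p then h.choose else Classical.arbitrary _
  have hspec : ∀ x ∈ F, x = y + unitVec d (f x) := by
    intro x hx
    have hdx : dist1 d y x = 1 := by
      rw [dist1_comm]; exact (Finset.mem_filter.mp hx).2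
    have h := exists_unitVec hdx
    simp only [f, dif_pos h]
    exact h.choose_spec
  have hcard : F.card ≤ (Finset.univ.filter fun p : Fin d × Bool => y + unitVec d p ∈ Λ).card := by
    refine Finset.card_le_card_of_injOn f (fun x hx => ?_)
      (fun x1 h1 x2 h2 he => by rw [hspec x1 h1, hspec x2 h2, he])
    have hxΛ : x ∈ Λ := (Finset.mem_filter.mp hx).1
    refine Finset.mem_filter.mpr ⟨Finset.mem_univ _, ?_⟩
    rw [← hspec x hx]; exact hxΛ
  have hsplit := Finset.card_filter_add_card_filter_not
    (s := (Finset.univ : Finset (Fin d × Bool)))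
    (p := fun p => y + unitVec d p ∈ Λ)
  have hneg : 1 ≤ (Finset.univ.filter fun p : Fin d × Bool => y + unitVec d p ∉ Λ).card :=
    Finset.card_pos.mpr ⟨p₀, Finset.mem_filter.mpr ⟨Finset.mem_univ _, hp₀⟩⟩
  have huniv : (Finset.univ : Finset (Fin d × Bool)).card = 2 * d := by
    simp [Finset.card_univ, mul_comm]
  omega

lemma key_bound {d : ℕ} (hd : 1 ≤ d) (Λ : Finset (Fin d → ℤ)) (φ : (Fin d → ℤ) → ℂ)
    (hsupp : ∀ x, x ∉ bdry d Λ → φ x = 0) :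
    ∑ x ∈ Λ, Complex.normSq (∑ y ∈ Λ.filter (fun y => dist1 d x y = 1), φ y) ≤
      (4 * (d : ℝ) ^ 2 - 2 * d) * ∑ x ∈ Λ, Complex.normSq (φ x) := by
  classical
  set S : (Fin d → ℤ) → Finset (Fin d → ℤ) :=
    fun x => Λ.filter fun y => dist1 d x y = 1 ∧ φ y ≠ 0 with hS
  -- rewrite the inner sum over S x
  have hsum : ∀ x, ∑ y ∈ Λ.filter (fun y => dist1 d x y = 1), φ y = ∑ y ∈ S x, φ y := by
    intro x
    rw [hS]
    simp only [← Finset.filter_filter]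
    exact (Finset.sum_filter_ne_zero _).symm
  -- Cauchy-Schwarz per site
  have hCS : ∀ x, Complex.normSq (∑ y ∈ S x, φ y) ≤
      ((S x).card : ℝ) * ∑ y ∈ S x, Complex.normSq (φ y) := by
    intro x
    have h1 : ‖∑ y ∈ S x, φ y‖ ≤ ∑ y ∈ S x, ‖φ y‖ :=
      norm_sum_le _ _
    have h2 : (∑ y ∈ S x, ‖φ y‖) ^ 2 ≤
        ((S x).card : ℝ) * ∑ y ∈ S x, ‖φ y‖ ^ 2 := by
      simpa using sq_sum_le_card_mul_sum_sq (s := S x) (f := fun y => ‖φ y‖)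
    calc Complex.normSq (∑ y ∈ S x, φ y)
        = ‖∑ y ∈ S x, φ y‖ ^ 2 := (Complex.sq_norm _).symm
      _ ≤ (∑ y ∈ S x, ‖φ y‖) ^ 2 := by
          exact pow_le_pow_left₀ (norm_nonneg _) h1 2
      _ ≤ ((S x).card : ℝ) * ∑ y ∈ S x, ‖φ y‖ ^ 2 := h2
      _ = ((S x).card : ℝ) * ∑ y ∈ S x, Complex.normSq (φ y) := by
          simp [Complex.sq_norm]
  have hcardS : ∀ x, ((S x).card : ℝ) ≤ 2 * d := by
    intro x
    exact_mod_cast Nat.cast_le.mpr (card_nbr_le hd x (S x)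
      (fun y hy => (Finset.mem_filter.mp hy).2.1))
  -- swap order of summation
  have hswap : ∑ x ∈ Λ, ∑ y ∈ S x, Complex.normSq (φ y) =
      ∑ y ∈ Λ, ((Λ.filter fun x => dist1 d x y = 1 ∧ φ y ≠ 0).card : ℝ) *
        Complex.normSq (φ y) := by
    simp only [hS, Finset.sum_filter]
    rw [Finset.sum_comm]
    refine Finset.sum_congr rfl fun y _ => ?_
    rw [← Finset.sum_filter, Finset.sum_const, nsmul_eq_mul]
  -- per-site bound on the boundary degree
  have hdeg : ∀ y ∈ Λ, ((Λ.filter fun x => dist1 d x y = 1 ∧ φ y ≠ 0).card : ℝ) *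
      Complex.normSq (φ y) ≤ (2 * d - 1) * Complex.normSq (φ y) := by
    intro y _
    by_cases hφ : φ y = 0
    · simp [hφ]
    · have hyb : y ∈ bdry d Λ := by
        by_contra hc; exact hφ (hsupp y hc)
      have h1 : (Λ.filter fun x => dist1 d x y = 1 ∧ φ y ≠ 0) =
          Λ.filter fun x => dist1 d x y = 1 := by
        refine Finset.filter_congr fun x _ => ?_
        simp [hφ]
      rw [h1]
      have h2 := card_nbr_bdry hd hyb
      have h3 : ((Λ.filter fun x => dist1 d x y = 1).card : ℝ) ≤ 2 * d - 1 := by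
        have : ((Λ.filter fun x => dist1 d x y = 1).card : ℝ) + 1 ≤ 2 * d := by
          exact_mod_cast h2
        linarith
      exact mul_le_mul_of_nonneg_right h3 (Complex.normSq_nonneg _)
  -- put it together
  have hmain : ∑ x ∈ Λ, Complex.normSq (∑ y ∈ S x, φ y) ≤
      2 * (d : ℝ) * ∑ x ∈ Λ, ∑ y ∈ S x, Complex.normSq (φ y) := by
    rw [Finset.mul_sum]
    refine Finset.sum_le_sum fun x _ => (hCS x).trans ?_
    exact mul_le_mul_of_nonneg_right (hcardS x)
      (Finset.sum_nonneg fun y _ => Complex.normSq_nonneg _)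
  have hmain2 : ∑ x ∈ Λ, ∑ y ∈ S x, Complex.normSq (φ y) ≤
      (2 * (d : ℝ) - 1) * ∑ y ∈ Λ, Complex.normSq (φ y) := by
    rw [hswap, Finset.mul_sum]
    exact Finset.sum_le_sum hdeg
  have hnn : (0 : ℝ) ≤ ∑ y ∈ Λ, Complex.normSq (φ y) :=
    Finset.sum_nonneg fun y _ => Complex.normSq_nonneg _
  calc ∑ x ∈ Λ, Complex.normSq (∑ y ∈ Λ.filter (fun y => dist1 d x y = 1), φ y)
      = ∑ x ∈ Λ, Complex.normSq (∑ y ∈ S x, φ y) := by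
        exact Finset.sum_congr rfl fun x _ => by rw [hsum x]
    _ ≤ 2 * (d : ℝ) * ∑ x ∈ Λ, ∑ y ∈ S x, Complex.normSq (φ y) := hmain
    _ ≤ 2 * (d : ℝ) * ((2 * (d : ℝ) - 1) * ∑ y ∈ Λ, Complex.normSq (φ y)) := by
        refine mul_le_mul_of_nonneg_left hmain2 (by positivity)
    _ = (4 * (d : ℝ) ^ 2 - 2 * d) * ∑ x ∈ Λ, Complex.normSq (φ x) := by ring

/-- For every `φ ∈ ℓ²(Λ)` supported on `∂Λ`:
`‖h_Λ φ‖² ≤ 4d·(φ, h_Λ φ) − 2d·‖φ‖²`. -/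
theorem lap_sq_form_bound (d : ℕ) (hd : 1 ≤ d) (Λ : Finset (Fin d → ℤ))
    (hΛ : Λ.Nonempty) (φ : (Fin d → ℤ) → ℂ)
    (hsupp : ∀ x, x ∉ bdry d Λ → φ x = 0) :
    ∑ x ∈ Λ, ‖lapAct d Λ φ x‖ ^ 2 ≤
      4 * d * (∑ x ∈ Λ, (starRingEnd ℂ) (φ x) * lapAct d Λ φ x).re -
        2 * d * ∑ x ∈ Λ, ‖φ x‖ ^ 2 := by
  classical
  set A : (Fin d → ℤ) → ℂ := fun x => ∑ y ∈ Λ.filter (fun y => dist1 d x y = 1), φ y with hA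
  have hlap : ∀ x, lapAct d Λ φ x = 2 * (d : ℂ) * φ x - A x := by
    intro x; rw [lapAct, hA]; ring
  -- pointwise expansion of |lap|^2
  have h1 : ∀ x, ‖lapAct d Λ φ x‖ ^ 2 =
      4 * (d : ℝ) ^ 2 * Complex.normSq (φ x) + Complex.normSq (A x)
        - 4 * d * ((starRingEnd ℂ) (φ x) * A x).re := by
    intro x
    rw [hlap x, Complex.sq_norm, Complex.normSq_sub]
    have : Complex.normSq (2 * (d : ℂ) * φ x) = 4 * (d : ℝ) ^ 2 * Complex.normSq (φ x) := by
      rw [Complex.normSq_mul]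
      have : Complex.normSq (2 * (d : ℂ)) = 4 * (d : ℝ) ^ 2 := by
        simp [Complex.normSq_apply]; ring
      rw [this]
    rw [this]
    have : (2 * (d : ℂ) * φ x * (starRingEnd ℂ) (A x)).re =
        2 * (d : ℝ) * ((starRingEnd ℂ) (φ x) * A x).re := by
      simp [Complex.mul_re, Complex.conj_re, Complex.conj_im]
      ring
    rw [this]; ring
  -- pointwise expansion of the quadratic form
  have h2 : ∀ x, ((starRingEnd ℂ) (φ x) * lapAct d Λ φ x).re =
      2 * (d : ℝ) * Complex.normSq (φ x) - ((starRingEnd ℂ) (φ x) * A x).re := by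
    intro x
    rw [hlap x]
    simp [Complex.mul_re, Complex.sub_re, Complex.sub_im, Complex.conj_re, Complex.conj_im,
      Complex.normSq_apply]
    ring
  have habs : ∀ x, ‖φ x‖ ^ 2 = Complex.normSq (φ x) := fun x => Complex.sq_norm _
  have hkey := key_bound hd Λ φ hsupp
  rw [Complex.re_sum]
  calc ∑ x ∈ Λ, ‖lapAct d Λ φ x‖ ^ 2
      = 4 * (d : ℝ) ^ 2 * ∑ x ∈ Λ, Complex.normSq (φ x)
        + ∑ x ∈ Λ, Complex.normSq (A x)
        - 4 * d * ∑ x ∈ Λ, ((starRingEnd ℂ) (φ x) * A x).re := by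
        rw [Finset.mul_sum, Finset.mul_sum, ← Finset.sum_add_distrib, ← Finset.sum_sub_distrib]
        exact Finset.sum_congr rfl fun x _ => h1 x
    _ ≤ 4 * (d : ℝ) ^ 2 * ∑ x ∈ Λ, Complex.normSq (φ x)
        + (4 * (d : ℝ) ^ 2 - 2 * d) * ∑ x ∈ Λ, Complex.normSq (φ x)
        - 4 * d * ∑ x ∈ Λ, ((starRingEnd ℂ) (φ x) * A x).re := by
        have := hkey
        linarith
    _ = 4 * d * ∑ x ∈ Λ, ((starRingEnd ℂ) (φ x) * lapAct d Λ φ x).re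
        - 2 * d * ∑ x ∈ Λ, ‖φ x‖ ^ 2 := by
        have e1 : ∑ x ∈ Λ, ((starRingEnd ℂ) (φ x) * lapAct d Λ φ x).re =
            2 * (d : ℝ) * ∑ x ∈ Λ, Complex.normSq (φ x)
              - ∑ x ∈ Λ, ((starRingEnd ℂ) (φ x) * A x).re := by
          rw [Finset.mul_sum, ← Finset.sum_sub_distrib]
          exact Finset.sum_congr rfl fun x _ => h2 x
        have e2 : ∑ x ∈ Λ, ‖φ x‖ ^ 2 = ∑ x ∈ Λ, Complex.normSq (φ x) :=
          Finset.sum_congr rfl fun x _ => habs x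
        rw [e1, e2]; ring

end
end

section
/- For every integer d ≥ 1, every finite nonempty Λ ⊂ ℤ^d, every x ∈ Λ, and every k ∈ [−π,π]^d with ε_k ≤ 2, one has |b_k(x)|² ≥ (1 − ε_k)·b_0(x)², where b_0(x) = #{unit lattice vectors e : x+e ∉ Λ} if x ∈ ∂Λ and b_0(x) = 0 otherwise. -/
open scoped BigOperators

noncomputable section

/-- For every `x ∈ Λ` and `k ∈ [−π,π]^d` with `ε_k ≤ 2`:
`|b_k(x)|² ≥ (1 − ε_k)·b_0(x)²`, where `b_0(x)` is the number of unit lattice vectors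
`e` with `x + e ∉ Λ` (equal to `0` when `x ∉ ∂Λ`). -/
theorem bk_pointwise_lower (d : ℕ) (hd : 1 ≤ d) (Λ : Finset (Fin d → ℤ))
    (hΛ : Λ.Nonempty) (x : Fin d → ℤ) (hx : x ∈ Λ) (k : Fin d → ℝ)
    (hk : ∀ i, |k i| ≤ Real.pi) (he : epsk d k ≤ 2) :
    ‖bk d Λ k x‖ ^ 2 ≥ (1 - epsk d k) *
      (((Finset.univ.filter fun p : Fin d × Bool => x + unitVec d p ∉ Λ).card : ℝ)) ^ 2 := by
  classical
  set S := Finset.univ.filter fun p : Fin d × Bool => x + unitVec d p ∉ Λ with hS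
  set N : ℝ := (S.card : ℝ) with hN
  have hN0 : (0 : ℝ) ≤ N := Nat.cast_nonneg _
  -- each cosine is at least 1 - ε/2
  have hcos : ∀ j, (1 : ℝ) - Real.cos (k j) ≤ epsk d k / 2 := by
    intro j
    have h1 : ∀ i, (0 : ℝ) ≤ 1 - Real.cos (k i) := fun i => by
      nlinarith [Real.cos_le_one (k i)]
    have h2 : (1 : ℝ) - Real.cos (k j) ≤ ∑ i, (1 - Real.cos (k i)) :=
      Finset.single_le_sum (fun i _ => h1 i) (Finset.mem_univ j)
    have h3 : ∑ i, ((1 : ℝ) - Real.cos (k i)) = d - ∑ i, Real.cos (k i) := by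
      simp [Finset.sum_sub_distrib]
    rw [h3] at h2
    simp only [epsk]
    linarith
  -- the phase has modulus 1
  have hz : (∑ i, (k i : ℂ) * ((x i : ℤ) : ℂ)) = ((∑ i, k i * (x i : ℤ) : ℝ) : ℂ) := by
    push_cast
    rfl
  have hphase : ‖Complex.exp (-Complex.I * ∑ i, (k i : ℂ) * ((x i : ℤ) : ℂ))‖ = 1 := by
    rw [hz, Complex.norm_exp]
    simp [Complex.mul_re]
  -- the real part of the sum is the sum of cosines
  have hre : (∑ p ∈ S, Complex.exp (-Complex.I * (if p.2 then (k p.1 : ℂ) else -(k p.1 : ℂ)))).re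
      = ∑ p ∈ S, Real.cos (k p.1) := by
    rw [Complex.re_sum]
    refine Finset.sum_congr rfl fun p _ => ?_
    by_cases hp : p.2
    · have h : -Complex.I * (if p.2 then (k p.1 : ℂ) else -(k p.1 : ℂ))
          = ((-(k p.1) : ℝ) : ℂ) * Complex.I := by
        rw [if_pos hp]; push_cast; ring
      rw [h, Complex.exp_ofReal_mul_I_re, Real.cos_neg]
    · have h : -Complex.I * (if p.2 then (k p.1 : ℂ) else -(k p.1 : ℂ))
          = ((k p.1 : ℝ) : ℂ) * Complex.I := by
        rw [if_neg hp]; push_cast; ring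
      rw [h, Complex.exp_ofReal_mul_I_re]
  -- lower bound on the sum of cosines
  have hsum : N * (1 - epsk d k / 2) ≤ ∑ p ∈ S, Real.cos (k p.1) := by
    have : ∑ p ∈ S, ((1 : ℝ) - epsk d k / 2) ≤ ∑ p ∈ S, Real.cos (k p.1) :=
      Finset.sum_le_sum fun p _ => by linarith [hcos p.1]
    rw [Finset.sum_const, nsmul_eq_mul] at this; exact this
  have h0 : (0 : ℝ) ≤ 1 - epsk d k / 2 := by linarith
  -- |bk x| ≥ N (1 - ε/2)
  have habs : N * (1 - epsk d k / 2) ≤ ‖bk d Λ k x‖ := by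
    rw [bk, if_pos hx, norm_mul, hphase, one_mul]
    calc N * (1 - epsk d k / 2) ≤ ∑ p ∈ S, Real.cos (k p.1) := hsum
      _ = (∑ p ∈ S, Complex.exp (-Complex.I * (if p.2 then (k p.1 : ℂ) else -(k p.1 : ℂ)))).re :=
          hre.symm
      _ ≤ ‖_‖ := Complex.re_le_norm _
  have habs0 : (0 : ℝ) ≤ N * (1 - epsk d k / 2) := mul_nonneg hN0 h0
  have hsq : (N * (1 - epsk d k / 2)) ^ 2 ≤ ‖bk d Λ k x‖ ^ 2 := by
    exact pow_le_pow_left₀ habs0 habs 2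
  nlinarith [sq_nonneg (epsk d k), sq_nonneg N, hsq]

end
end

section
/- Fix an integer d ≥ 1 and ρ ∈ (0,1). The function g(α) = (1−α)·e(ρ/(1−α)) is convex on [0, 1−ρ], differentiable on the interior with derivative g′(α) = ξ(ρ/(1−α)), and satisfies g(α) ≥ e(ρ) + α·ξ(ρ) for all α ∈ [0, 1−ρ]. -/
open scoped BigOperators
open MeasureTheory Real Set Filter Topology

noncomputable section

namespace Fermi

variable {d : ℕ}

lemma epsk_nonneg (k : Fin d → ℝ) : 0 ≤ epsk d k := by
  have h : ∑ i, Real.cos (k i) ≤ ∑ _i : Fin d, (1 : ℝ) :=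
    Finset.sum_le_sum fun i _ => Real.cos_le_one _
  simp only [Finset.sum_const, Finset.card_univ, Fintype.card_fin, nsmul_eq_mul, mul_one] at h
  simp only [epsk]; linarith

lemma epsk_le (k : Fin d → ℝ) : epsk d k ≤ 4 * d := by
  have h : ∑ _i : Fin d, (-1 : ℝ) ≤ ∑ i, Real.cos (k i) :=
    Finset.sum_le_sum fun i _ => Real.neg_one_le_cos _
  simp only [Finset.sum_const, Finset.card_univ, Fintype.card_fin, nsmul_eq_mul, mul_neg_one] at h
  simp only [epsk]; linarith

lemma continuous_epsk : Continuous (epsk d) := by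
  unfold epsk
  exact continuous_const.sub (continuous_const.mul (continuous_finset_sum _ fun i _ =>
    Real.continuous_cos.comp (continuous_apply i)))

lemma measurableSet_BZ : MeasurableSet {k : Fin d → ℝ | inBZ d k} := by
  have : {k : Fin d → ℝ | inBZ d k} = ⋂ i, {k | |k i| ≤ Real.pi} := by
    ext k; simp [inBZ]
  rw [this]
  exact MeasurableSet.iInter fun i =>
    measurableSet_le ((continuous_apply i).abs.measurable) measurable_const

lemma BZ_eq : {k : Fin d → ℝ | inBZ d k} = Set.pi Set.univ (fun _ : Fin d => Icc (-π) π) := by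
  ext k; simp [inBZ, abs_le, Set.mem_pi, Pi.le_def, forall_and]

lemma vol_BZ : volume {k : Fin d → ℝ | inBZ d k} = ENNReal.ofReal (2 * π) ^ d := by
  rw [BZ_eq, volume_pi_pi]
  simp [Real.volume_Icc]
  congr 1
  rw [← two_mul, ENNReal.ofReal_mul (by norm_num)]; simp

lemma measurableSet_sub (E : ℝ) : MeasurableSet {k : Fin d → ℝ | inBZ d k ∧ epsk d k < E} := by
  have : {k : Fin d → ℝ | inBZ d k ∧ epsk d k < E}
      = {k | inBZ d k} ∩ epsk d ⁻¹' (Iio E) := rfl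
  rw [this]
  exact measurableSet_BZ.inter (continuous_epsk.measurable measurableSet_Iio)

lemma countable_cos_level (c : ℝ) : ({x : ℝ | Real.cos x = c}).Countable := by
  by_cases h : |c| ≤ 1
  · have habs := abs_le.1 h
    have hsub : {x : ℝ | Real.cos x = c} ⊆
        ⋃ n : ℤ, ({2 * n * π + Real.arccos c, 2 * n * π - Real.arccos c} : Set ℝ) := by
      intro x hx
      have hc : Real.cos (Real.arccos c) = Real.cos x := by
        rw [Real.cos_arccos habs.1 habs.2]; exact hx.symm
      rw [Real.cos_eq_cos_iff] at hc
      obtain ⟨n, hn | hn⟩ := hc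
      · exact Set.mem_iUnion.2 ⟨n, Or.inl hn⟩
      · exact Set.mem_iUnion.2 ⟨n, Or.inr hn⟩
    exact Set.Countable.mono hsub
      (Set.countable_iUnion fun n => (Set.finite_singleton _).insert _ |>.countable)
  · have : {x : ℝ | Real.cos x = c} = ∅ := by
      ext x
      simp only [Set.mem_setOf_eq, Set.mem_empty_iff_false, iff_false]
      intro hx
      exact h (hx ▸ Real.abs_cos_le_one x)
    rw [this]; exact Set.countable_empty

lemma cos_sum_level_null :
    ∀ (n : ℕ) (c : ℝ), volume {k : Fin (n + 1) → ℝ | ∑ i, Real.cos (k i) = c} = 0 := by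
  intro n
  induction n with
  | zero =>
    intro c
    have e := (MeasureTheory.volume_preserving_funUnique (Fin 1) ℝ)
    have hset : {k : Fin 1 → ℝ | ∑ i, Real.cos (k i) = c}
        = (MeasurableEquiv.funUnique (Fin 1) ℝ) ⁻¹' {x : ℝ | Real.cos x = c} := by
      ext k
      simp [MeasurableEquiv.funUnique, Fin.sum_univ_one]
    erw [hset, e.measure_preimage]
    · exact (countable_cos_level c).measure_zero _
    · exact ((isClosed_eq Real.continuous_cos continuous_const).measurableSet).nullMeasurableSet
  | succ m ih =>
    intro c
    have e := MeasureTheory.volume_preserving_piFinSuccAbove (fun _ : Fin (m + 2) => ℝ) 0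
    set T : Set (ℝ × (Fin (m + 1) → ℝ)) :=
      {p | Real.cos p.1 + ∑ j, Real.cos (p.2 j) = c} with hT
    have hTm : MeasurableSet T := by
      have : Continuous fun p : ℝ × (Fin (m + 1) → ℝ) =>
          Real.cos p.1 + ∑ j, Real.cos (p.2 j) := by
        exact (Real.continuous_cos.comp continuous_fst).add
          (continuous_finset_sum _ fun j _ =>
            Real.continuous_cos.comp ((continuous_apply j).comp continuous_snd))
      exact (isClosed_eq this continuous_const).measurableSet
    have hset : {k : Fin (m + 2) → ℝ | ∑ i, Real.cos (k i) = c}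
        = (MeasurableEquiv.piFinSuccAbove (fun _ : Fin (m + 2) => ℝ) 0) ⁻¹' T := by
      ext k
      simp only [Set.mem_setOf_eq, Set.mem_preimage, MeasurableEquiv.piFinSuccAbove, hT]
      rw [Fin.sum_univ_succ]
      simp [Fin.succAbove, Fin.tail]
    rw [hset, e.measure_preimage hTm.nullMeasurableSet]
    rw [show ((volume : Measure (ℝ × (Fin (m+1) → ℝ)))) = (volume : Measure ℝ).prod volume from rfl]
    rw [MeasureTheory.Measure.measure_prod_null hTm]
    filter_upwards with x
    have : Prod.mk x ⁻¹' T = {y : Fin (m + 1) → ℝ | ∑ j, Real.cos (y j) = c - Real.cos x} := by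
      ext y; simp only [Set.mem_preimage, Set.mem_setOf_eq, hT]; constructor <;> intro h <;> linarith
    rw [this]
    exact ih _

lemma level_null (hd : 1 ≤ d) (E : ℝ) :
    volume {k : Fin d → ℝ | inBZ d k ∧ epsk d k = E} = 0 := by
  obtain ⟨n, rfl⟩ : ∃ n, d = n + 1 := ⟨d - 1, (Nat.succ_pred_eq_of_pos hd).symm⟩
  refine measure_mono_null (fun k hk => ?_) (cos_sum_level_null n ((2 * (n+1) - E) / 2))
  have h := hk.2
  simp only [epsk] at h
  simp only [Set.mem_setOf_eq]
  push_cast at h ⊢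
  linarith

lemma vol_sub_le (E : ℝ) :
    volume {k : Fin d → ℝ | inBZ d k ∧ epsk d k < E} ≤ ENNReal.ofReal (2 * π) ^ d := by
  rw [← vol_BZ]
  exact measure_mono fun k hk => hk.1

lemma vol_sub_ne_top (E : ℝ) :
    volume {k : Fin d → ℝ | inBZ d k ∧ epsk d k < E} ≠ ⊤ :=
  ne_top_of_le_ne_top (ENNReal.pow_ne_top ENNReal.ofReal_ne_top) (vol_sub_le E)

lemma twoPiPow_pos : (0 : ℝ) < (2 * π) ^ d := pow_pos (by positivity) d

lemma toReal_ofReal_pow : (ENNReal.ofReal (2 * π) ^ d).toReal = (2 * π) ^ d := by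
  rw [ENNReal.toReal_pow, ENNReal.toReal_ofReal (by positivity)]

lemma volBelow_nonneg (E : ℝ) : 0 ≤ volBelow d E := ENNReal.toReal_nonneg

lemma volBelow_mono {E E' : ℝ} (h : E ≤ E') : volBelow d E ≤ volBelow d E' :=
  ENNReal.toReal_mono (vol_sub_ne_top E') (measure_mono fun k hk => ⟨hk.1, lt_of_lt_of_le hk.2 h⟩)

lemma volBelow_le (E : ℝ) : volBelow d E ≤ (2 * π) ^ d := by
  rw [← toReal_ofReal_pow]
  exact ENNReal.toReal_mono (ENNReal.pow_ne_top ENNReal.ofReal_ne_top) (vol_sub_le E)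

lemma volBelow_nonpos {E : ℝ} (h : E ≤ 0) : volBelow d E = 0 := by
  have : {k : Fin d → ℝ | inBZ d k ∧ epsk d k < E} = ∅ := by
    ext k
    simp only [Set.mem_setOf_eq, Set.mem_empty_iff_false, iff_false, not_and, not_lt]
    exact fun _ => le_trans h (epsk_nonneg k)
  simp [volBelow, this]

lemma volBelow_top (hd : 1 ≤ d) : volBelow d (4 * d) = (2 * π) ^ d := by
  have hsplit : {k : Fin d → ℝ | inBZ d k} ⊆
      {k : Fin d → ℝ | inBZ d k ∧ epsk d k < 4 * d} ∪
      {k : Fin d → ℝ | inBZ d k ∧ epsk d k = 4 * d} := by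
    intro k hk
    rcases lt_or_eq_of_le (epsk_le k) with h | h
    · exact Or.inl ⟨hk, h⟩
    · exact Or.inr ⟨hk, h⟩
  have h1 : volume {k : Fin d → ℝ | inBZ d k} ≤
      volume {k : Fin d → ℝ | inBZ d k ∧ epsk d k < 4 * d} := by
    calc volume {k : Fin d → ℝ | inBZ d k} ≤ _ := measure_mono hsplit
    _ ≤ _ + _ := measure_union_le _ _
    _ = volume {k : Fin d → ℝ | inBZ d k ∧ epsk d k < 4 * d} := by
        rw [level_null hd, add_zero]
  have h2 := vol_sub_le (d := d) (4 * d)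
  rw [← vol_BZ] at h2
  have := le_antisymm h2 h1
  rw [volBelow, this, vol_BZ, toReal_ofReal_pow]

lemma sub_anti (E : ℝ) : Antitone (fun m : ℕ =>
    {k : Fin d → ℝ | inBZ d k ∧ epsk d k < E + 1 / (m + 1)}) := by
  intro a b hab k hk
  refine ⟨hk.1, lt_of_lt_of_le hk.2 ?_⟩
  have : (1 : ℝ) / (b + 1) ≤ 1 / (a + 1) := by
    apply one_div_le_one_div_of_le (by positivity)
    exact_mod_cast by omega
  linarith

lemma volBelow_tendsto_right (hd : 1 ≤ d) (E : ℝ) :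
    Tendsto (fun m : ℕ => volBelow d (E + 1 / (m + 1))) atTop (𝓝 (volBelow d E)) := by
  have hinter : (⋂ m : ℕ, {k : Fin d → ℝ | inBZ d k ∧ epsk d k < E + 1 / (m + 1)})
      = {k : Fin d → ℝ | inBZ d k ∧ epsk d k ≤ E} := by
    ext k
    simp only [Set.mem_iInter, Set.mem_setOf_eq]
    constructor
    · intro h
      refine ⟨(h 0).1, ?_⟩
      by_contra hlt
      push_neg at hlt
      obtain ⟨m, hm⟩ := exists_nat_one_div_lt (sub_pos.2 hlt)
      have := (h m).2
      linarith
    · intro h m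
      have : (0:ℝ) < 1 / (m + 1) := by positivity
      exact ⟨h.1, by linarith [h.2]⟩
  have hle : volume {k : Fin d → ℝ | inBZ d k ∧ epsk d k ≤ E}
      = volume {k : Fin d → ℝ | inBZ d k ∧ epsk d k < E} := by
    apply le_antisymm
    · calc volume {k : Fin d → ℝ | inBZ d k ∧ epsk d k ≤ E}
          ≤ volume ({k : Fin d → ℝ | inBZ d k ∧ epsk d k < E} ∪
            {k : Fin d → ℝ | inBZ d k ∧ epsk d k = E}) := by
            apply measure_mono
            intro k hk
            rcases lt_or_eq_of_le hk.2 with h | h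
            · exact Or.inl ⟨hk.1, h⟩
            · exact Or.inr ⟨hk.1, h⟩
      _ ≤ _ + _ := measure_union_le _ _
      _ = volume {k : Fin d → ℝ | inBZ d k ∧ epsk d k < E} := by
            rw [level_null hd, add_zero]
    · exact measure_mono fun k hk => ⟨hk.1, le_of_lt hk.2⟩
  have h := tendsto_measure_iInter_atTop
    (μ := (volume : Measure (Fin d → ℝ)))
    (s := fun m : ℕ => {k : Fin d → ℝ | inBZ d k ∧ epsk d k < E + 1 / (m + 1)})
    (fun m => (measurableSet_sub _).nullMeasurableSet) (sub_anti E) ⟨0, vol_sub_ne_top _⟩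
  rw [hinter, hle] at h
  exact (ENNReal.tendsto_toReal (vol_sub_ne_top E)).comp h

lemma volBelow_tendsto_left (E : ℝ) :
    Tendsto (fun m : ℕ => volBelow d (E - 1 / (m + 1))) atTop (𝓝 (volBelow d E)) := by
  have hmono : Monotone (fun m : ℕ =>
      {k : Fin d → ℝ | inBZ d k ∧ epsk d k < E - 1 / (m + 1)}) := by
    intro a b hab k hk
    refine ⟨hk.1, lt_of_lt_of_le hk.2 ?_⟩
    have : (1 : ℝ) / (b + 1) ≤ 1 / (a + 1) := by
      apply one_div_le_one_div_of_le (by positivity)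
      exact_mod_cast by omega
    linarith
  have hunion : (⋃ m : ℕ, {k : Fin d → ℝ | inBZ d k ∧ epsk d k < E - 1 / (m + 1)})
      = {k : Fin d → ℝ | inBZ d k ∧ epsk d k < E} := by
    ext k
    simp only [Set.mem_iUnion, Set.mem_setOf_eq]
    constructor
    · rintro ⟨m, hm⟩
      have : (0:ℝ) < 1 / (m + 1) := by positivity
      exact ⟨hm.1, by linarith [hm.2]⟩
    · rintro ⟨hbz, hlt⟩
      obtain ⟨m, hm⟩ := exists_nat_one_div_lt (sub_pos.2 hlt)
      exact ⟨m, hbz, by linarith⟩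
  have h := tendsto_measure_iUnion_atTop (μ := (volume : Measure (Fin d → ℝ))) hmono
  rw [hunion] at h
  exact (ENNReal.tendsto_toReal (vol_sub_ne_top E)).comp h

lemma S_lb {ρ : ℝ} (h0 : 0 < ρ) :
    ∀ E ∈ {E : ℝ | ρ ≤ volBelow d E / (2 * π) ^ d}, (0:ℝ) ≤ E := by
  intro E hE
  by_contra hneg
  push_neg at hneg
  rw [Set.mem_setOf_eq, volBelow_nonpos (le_of_lt hneg), zero_div] at hE
  linarith

lemma S_bddBelow {ρ : ℝ} (h0 : 0 < ρ) :
    BddBelow {E : ℝ | ρ ≤ volBelow d E / (2 * π) ^ d} := ⟨0, S_lb h0⟩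

lemma mem_S_fourd (hd : 1 ≤ d) {ρ : ℝ} (h1 : ρ ≤ 1) :
    (4 * (d:ℝ)) ∈ {E : ℝ | ρ ≤ volBelow d E / (2 * π) ^ d} := by
  simp only [Set.mem_setOf_eq, volBelow_top hd]
  rw [div_self (ne_of_gt (twoPiPow_pos (d := d)))]
  exact h1

lemma fermi_nonneg (hd : 1 ≤ d) {ρ : ℝ} (h0 : 0 < ρ) (h1 : ρ ≤ 1) : 0 ≤ fermiLevel d ρ :=
  le_csInf ⟨4 * d, mem_S_fourd hd h1⟩ (S_lb h0)

lemma fermi_le_fourd (hd : 1 ≤ d) {ρ : ℝ} (h0 : 0 < ρ) (h1 : ρ ≤ 1) :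
    fermiLevel d ρ ≤ 4 * d :=
  csInf_le (S_bddBelow h0) (mem_S_fourd hd h1)

lemma volBelow_fermi (hd : 1 ≤ d) {ρ : ℝ} (h0 : 0 < ρ) (h1 : ρ ≤ 1) :
    volBelow d (fermiLevel d ρ) = (2 * π) ^ d * ρ := by
  set S := {E : ℝ | ρ ≤ volBelow d E / (2 * π) ^ d} with hS
  set μ := fermiLevel d ρ with hμ
  have hSne : S.Nonempty := ⟨4 * d, mem_S_fourd hd h1⟩
  have hge : (2 * π) ^ d * ρ ≤ volBelow d μ := by
    refine ge_of_tendsto (volBelow_tendsto_right hd μ) (Filter.Eventually.of_forall fun m => ?_)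
    have hpos : (0:ℝ) < 1 / (m + 1) := by positivity
    obtain ⟨E, hES, hElt⟩ := (csInf_lt_iff (S_bddBelow h0) hSne).1
      (show sInf S < μ + 1 / (m + 1) by
        have heq : sInf S = μ := rfl
        rw [heq]; linarith)
    have h1' : ρ ≤ volBelow d E / (2 * π) ^ d := hES
    rw [le_div_iff₀ (twoPiPow_pos (d := d))] at h1'
    calc (2 * π) ^ d * ρ = ρ * (2 * π) ^ d := by ring
    _ ≤ volBelow d E := h1'
    _ ≤ volBelow d (μ + 1 / (m + 1)) := volBelow_mono (le_of_lt hElt)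
  have hle : volBelow d μ ≤ (2 * π) ^ d * ρ := by
    refine le_of_tendsto (volBelow_tendsto_left μ) (Filter.Eventually.of_forall fun m => ?_)
    have hpos : (0:ℝ) < 1 / (m + 1) := by positivity
    have hnot : μ - 1 / (m + 1) ∉ S := by
      intro hmem
      have := csInf_le (S_bddBelow h0) hmem
      have heq : sInf S = μ := rfl
      rw [heq] at this
      linarith
    rw [hS, Set.mem_setOf_eq, not_le, div_lt_iff₀ (twoPiPow_pos (d := d))] at hnot
    calc volBelow d (μ - 1 / (m + 1)) ≤ ρ * (2 * π) ^ d := le_of_lt hnot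
    _ = (2 * π) ^ d * ρ := by ring
  linarith

lemma fermi_mono (hd : 1 ≤ d) {a b : ℝ} (h0 : 0 < a) (hab : a ≤ b) (h1 : b ≤ 1) :
    fermiLevel d a ≤ fermiLevel d b := by
  apply csInf_le_csInf (S_bddBelow h0) ⟨4 * d, mem_S_fourd hd h1⟩
  intro E hE
  exact le_trans hab hE

lemma volBelow_strictMono (hd : 1 ≤ d) {a b : ℝ} (ha : 0 ≤ a) (hab : a < b)
    (hb : b ≤ 4 * d) : volBelow d a < volBelow d b := by
  have hd0 : (0:ℝ) < 4 * d := by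
    have : (1:ℝ) ≤ d := by exact_mod_cast hd
    linarith
  set U : Set (Fin d → ℝ) :=
    {k | (∀ i, |k i| < π) ∧ a < epsk d k ∧ epsk d k < b} with hU
  have hUopen : IsOpen U := by
    have h1 : IsOpen {k : Fin d → ℝ | ∀ i, |k i| < π} := by
      have : {k : Fin d → ℝ | ∀ i, |k i| < π} = ⋂ i, (fun k : Fin d → ℝ => |k i|) ⁻¹' Iio π := by
        ext k; simp
      rw [this]
      exact isOpen_iInter_of_finite fun i =>
        ((continuous_apply i).abs).isOpen_preimage _ isOpen_Iio
    have h2 : IsOpen (epsk d ⁻¹' Ioo a b) := continuous_epsk.isOpen_preimage _ isOpen_Ioo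
    have : U = {k : Fin d → ℝ | ∀ i, |k i| < π} ∩ epsk d ⁻¹' Ioo a b := by
      ext k; simp [hU, Set.mem_setOf_eq, and_assoc]
    rw [this]; exact h1.inter h2
  have hUne : U.Nonempty := by
    set x : ℝ := 1 - (a + b) / (4 * d) with hx
    have hx1 : -1 < x := by
      rw [hx]
      have : (a + b) / (4 * d) < 2 := by
        rw [div_lt_iff₀ hd0]; linarith
      linarith
    have hx2 : x < 1 := by
      rw [hx]
      have : 0 < (a + b) / (4 * d) := by
        apply div_pos (by linarith) hd0
      linarith
    set t : ℝ := Real.arccos x with ht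
    have hcos : Real.cos t = x := Real.cos_arccos (le_of_lt hx1) (le_of_lt hx2)
    have ht0 : 0 < t := Real.arccos_pos.2 hx2
    have htpi : t < π := lt_of_le_of_ne (Real.arccos_le_pi x)
      (fun h => absurd (Real.arccos_eq_pi.1 h) (by linarith))
    refine ⟨fun _ => t, fun i => ?_, ?_, ?_⟩
    · rw [abs_of_pos ht0]; exact htpi
    · have : epsk d (fun _ => t) = (a + b) / 2 := by
        simp only [epsk, Finset.sum_const, Finset.card_univ, Fintype.card_fin,
          nsmul_eq_mul, hcos, hx]
        field_simp
        ring
      rw [this]; linarith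
    · have : epsk d (fun _ => t) = (a + b) / 2 := by
        simp only [epsk, Finset.sum_const, Finset.card_univ, Fintype.card_fin,
          nsmul_eq_mul, hcos, hx]
        field_simp
        ring
      rw [this]; linarith
  have hUpos : 0 < volume U := hUopen.measure_pos volume hUne
  have hUsub : {k : Fin d → ℝ | inBZ d k ∧ epsk d k < a} ∪ U
      ⊆ {k : Fin d → ℝ | inBZ d k ∧ epsk d k < b} := by
    rintro k (hk | hk)
    · exact ⟨hk.1, lt_trans hk.2 hab⟩
    · exact ⟨fun i => le_of_lt (hk.1 i), hk.2.2⟩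
  have hdisj : Disjoint {k : Fin d → ℝ | inBZ d k ∧ epsk d k < a} U := by
    rw [Set.disjoint_left]
    rintro k hk hkU
    exact absurd hk.2 (not_lt.2 (le_of_lt hkU.2.1))
  have key : volume {k : Fin d → ℝ | inBZ d k ∧ epsk d k < a} + volume U
      ≤ volume {k : Fin d → ℝ | inBZ d k ∧ epsk d k < b} := by
    rw [← measure_union hdisj hUopen.measurableSet]
    exact measure_mono hUsub
  have hUne_top : volume U ≠ ⊤ := by
    refine ne_top_of_le_ne_top (vol_sub_ne_top (d := d) b) (le_trans (measure_mono ?_) le_rfl)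
    intro k hk
    exact ⟨fun i => le_of_lt (hk.1 i), hk.2.2⟩
  unfold volBelow
  have ha' := vol_sub_ne_top (d := d) a
  have hb' := vol_sub_ne_top (d := d) b
  have := ENNReal.toReal_mono hb' key
  rw [ENNReal.toReal_add ha' hUne_top] at this
  have hU0 : 0 < (volume U).toReal := ENNReal.toReal_pos (ne_of_gt hUpos) hUne_top
  linarith

lemma integrableOn_epsk {s : Set (Fin d → ℝ)}
    (hs : volume s ≠ ⊤) : IntegrableOn (epsk d) s volume := by
  apply Measure.integrableOn_of_bounded hs continuous_epsk.aestronglyMeasurable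
  filter_upwards with k
  rw [Real.norm_eq_abs, abs_of_nonneg (epsk_nonneg k)]
  exact epsk_le k

lemma enGS_diff (hd : 1 ≤ d) {a b : ℝ} (h0 : 0 < a) (hab : a ≤ b) (h1 : b ≤ 1) :
    (b - a) * fermiLevel d a ≤ enGS d b - enGS d a ∧
    enGS d b - enGS d a ≤ (b - a) * fermiLevel d b := by
  set μ := fermiLevel d a with hμ
  set μ' := fermiLevel d b with hμ'
  have hμμ' : μ ≤ μ' := fermi_mono hd h0 hab h1
  set A := {k : Fin d → ℝ | inBZ d k ∧ epsk d k < μ} with hA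
  set B := {k : Fin d → ℝ | inBZ d k ∧ epsk d k < μ'} with hB
  have hAB : A ⊆ B := fun k hk => ⟨hk.1, lt_of_lt_of_le hk.2 hμμ'⟩
  have hAm : MeasurableSet A := measurableSet_sub μ
  have hBm : MeasurableSet B := measurableSet_sub μ'
  have hAfin : volume A ≠ ⊤ := vol_sub_ne_top μ
  have hBfin : volume B ≠ ⊤ := vol_sub_ne_top μ'
  set D := B \ A with hD
  have hDm : MeasurableSet D := hBm.diff hAm
  have hDfin : volume D ≠ ⊤ :=
    ne_top_of_le_ne_top hBfin (measure_mono Set.diff_subset)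
  -- volume of D
  have hvolD : (volume D).toReal = (2 * π) ^ d * (b - a) := by
    have h2 : volume D = volume B - volume A := measure_diff hAB hAm.nullMeasurableSet hAfin
    rw [h2, ENNReal.toReal_sub_of_le (measure_mono hAB) hBfin]
    have hA' : (volume A).toReal = (2 * π) ^ d * a := volBelow_fermi hd h0 (le_trans hab h1)
    have hB' : (volume B).toReal = (2 * π) ^ d * b :=
      volBelow_fermi hd (lt_of_lt_of_le h0 hab) h1
    rw [hA', hB']; ring
  -- integral splitting
  have hintA : IntegrableOn (epsk d) A volume := integrableOn_epsk hAfin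
  have hintD : IntegrableOn (epsk d) D volume := integrableOn_epsk hDfin
  have hdisj : Disjoint A D := Set.disjoint_sdiff_right
  have hsplit : ∫ k in B, epsk d k = (∫ k in A, epsk d k) + ∫ k in D, epsk d k := by
    rw [← MeasureTheory.setIntegral_union hdisj hDm hintA hintD, Set.union_diff_cancel hAB]
  -- bounds on the integral over D
  have hlow : (volume D).toReal * μ ≤ ∫ k in D, epsk d k := by
    have : ∫ _k in D, μ ∂volume ≤ ∫ k in D, epsk d k := by
      apply setIntegral_mono_on (integrableOn_const hDfin) hintD hDm
      intro k hk
      rcases hk with ⟨hkB, hkA⟩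
      by_contra hlt
      push_neg at hlt
      exact hkA ⟨hkB.1, hlt⟩
    rwa [setIntegral_const, smul_eq_mul] at this
  have hhigh : ∫ k in D, epsk d k ≤ (volume D).toReal * μ' := by
    have : ∫ k in D, epsk d k ≤ ∫ _k in D, μ' ∂volume := by
      apply setIntegral_mono_on hintD (integrableOn_const hDfin) hDm
      intro k hk
      exact le_of_lt hk.1.2
    rwa [setIntegral_const, smul_eq_mul] at this
  -- conclude
  have hediff : enGS d b - enGS d a = (∫ k in D, epsk d k) / (2 * π) ^ d := by
    unfold enGS
    rw [← hμ, ← hμ', ← hA, ← hB, hsplit]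
    ring
  constructor
  · rw [hediff, le_div_iff₀ (twoPiPow_pos (d := d))]
    calc (b - a) * μ * (2 * π) ^ d = (2 * π) ^ d * (b - a) * μ := by ring
    _ = (volume D).toReal * μ := by rw [hvolD]
    _ ≤ _ := hlow
  · rw [hediff, div_le_iff₀ (twoPiPow_pos (d := d))]
    calc ∫ k in D, epsk d k ≤ (volume D).toReal * μ' := hhigh
    _ = (b - a) * μ' * (2 * π) ^ d := by rw [hvolD]; ring

lemma fermi_lt_fourd (hd : 1 ≤ d) {ρ : ℝ} (h0 : 0 < ρ) (h1 : ρ < 1) :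
    fermiLevel d ρ < 4 * d := by
  rcases lt_or_eq_of_le (fermi_le_fourd hd h0 (le_of_lt h1)) with h | h
  · exact h
  · exfalso
    have := volBelow_fermi hd h0 (le_of_lt h1)
    rw [h, volBelow_top hd] at this
    have h2 := twoPiPow_pos (d := d)
    nlinarith

lemma xi_mono (hd : 1 ≤ d) {a b : ℝ} (h0 : 0 < a) (hab : a ≤ b) (h1 : b ≤ 1) :
    xiFun d a ≤ xiFun d b := by
  have h := (enGS_diff hd h0 hab h1).2
  have hμ := fermi_mono hd h0 hab h1
  unfold xiFun
  nlinarith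

lemma enGS_lipschitz (hd : 1 ≤ d) {a b : ℝ} (h0 : 0 < a) (hab : a ≤ b) (h1 : b ≤ 1) :
    |enGS d b - enGS d a| ≤ 4 * d * (b - a) := by
  obtain ⟨hl, hh⟩ := enGS_diff hd h0 hab h1
  have h1' : 0 ≤ fermiLevel d a := fermi_nonneg hd h0 (le_trans hab h1)
  have h2' : fermiLevel d b ≤ 4 * d := fermi_le_fourd hd (lt_of_lt_of_le h0 hab) h1
  rw [abs_le]
  constructor <;> nlinarith

lemma fermi_cont (hd : 1 ≤ d) {r : ℝ} (h0 : 0 < r) (h1 : r < 1) :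
    ∀ ε > 0, ∃ δ > 0, ∀ ρ', 0 < ρ' → ρ' ≤ 1 → |ρ' - r| < δ →
      |fermiLevel d ρ' - fermiLevel d r| < ε := by
  intro ε hε
  set μ := fermiLevel d r with hμdef
  have hμ0 : 0 ≤ μ := fermi_nonneg hd h0 (le_of_lt h1)
  have hμ4 : μ < 4 * d := fermi_lt_fourd hd h0 h1
  have hvolr : volBelow d μ = (2 * π) ^ d * r := volBelow_fermi hd h0 (le_of_lt h1)
  -- upper side
  set η := min ε (4 * (d:ℝ) - μ) with hη
  have hηpos : 0 < η := lt_min hε (by linarith)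
  set E := μ + η / 2 with hE
  have hEμ : μ < E := by rw [hE]; linarith
  have hE4 : E ≤ 4 * d := by
    have : η ≤ 4 * d - μ := min_le_right _ _
    rw [hE]; linarith
  have hEε : E < μ + ε := by
    have : η ≤ ε := min_le_left _ _
    rw [hE]; linarith
  have hvolE : (2 * π) ^ d * r < volBelow d E := by
    rw [← hvolr]
    exact volBelow_strictMono hd hμ0 hEμ hE4
  set δ₂ := volBelow d E / (2 * π) ^ d - r with hδ₂
  have hδ₂pos : 0 < δ₂ := by
    rw [hδ₂, sub_pos, lt_div_iff₀ (twoPiPow_pos (d := d))]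
    linarith
  -- lower side
  by_cases hμz : μ = 0
  · -- lower bound trivial
    refine ⟨δ₂, hδ₂pos, fun ρ' hρ'0 hρ'1 hdist => ?_⟩
    have h2 := twoPiPow_pos (d := d)
    have hub : fermiLevel d ρ' ≤ E := by
      apply csInf_le (S_bddBelow hρ'0)
      rw [Set.mem_setOf_eq]
      have hsm : ρ' < r + δ₂ := by linarith [(abs_lt.1 hdist).2]
      rw [hδ₂] at hsm
      linarith
    have hlb : 0 ≤ fermiLevel d ρ' := fermi_nonneg hd hρ'0 hρ'1
    rw [abs_lt]
    exact ⟨by linarith, by linarith⟩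
  · have hμpos : 0 < μ := lt_of_le_of_ne hμ0 (Ne.symm hμz)
    set η' := min ε μ with hη'
    have hη'pos : 0 < η' := lt_min hε hμpos
    set E' := μ - η' / 2 with hE'
    have hE'0 : 0 ≤ E' := by
      have : η' ≤ μ := min_le_right _ _
      rw [hE']; linarith
    have hE'μ : E' < μ := by rw [hE']; linarith
    have hE'ε : μ - ε < E' := by
      have : η' ≤ ε := min_le_left _ _
      rw [hE']; linarith
    have hvolE' : volBelow d E' < (2 * π) ^ d * r := by
      rw [← hvolr]
      exact volBelow_strictMono hd hE'0 hE'μ (by linarith)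
    set δ₁ := r - volBelow d E' / (2 * π) ^ d with hδ₁
    have hδ₁pos : 0 < δ₁ := by
      rw [hδ₁, sub_pos, div_lt_iff₀ (twoPiPow_pos (d := d))]
      linarith
    refine ⟨min δ₁ δ₂, lt_min hδ₁pos hδ₂pos, fun ρ' hρ'0 hρ'1 hdist => ?_⟩
    have habs := abs_lt.1 hdist
    have hub : fermiLevel d ρ' ≤ E := by
      apply csInf_le (S_bddBelow hρ'0)
      rw [Set.mem_setOf_eq]
      have hsm : ρ' < r + δ₂ := by
        have := habs.2
        have := min_le_right δ₁ δ₂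
        linarith
      rw [hδ₂] at hsm
      linarith
    have hlb : E' < fermiLevel d ρ' := by
      by_contra hcon
      push_neg at hcon
      have hmono := volBelow_mono (d := d) hcon
      rw [volBelow_fermi hd hρ'0 hρ'1] at hmono
      have h2 := twoPiPow_pos (d := d)
      have hsm : r - δ₁ < ρ' := by
        have := habs.1
        have := min_le_left δ₁ δ₂
        linarith
      rw [hδ₁] at hsm
      have hsm' : volBelow d E' / (2 * π) ^ d < ρ' := by linarith
      rw [div_lt_iff₀ h2] at hsm'
      linarith
    rw [abs_lt]
    exact ⟨by linarith, by linarith⟩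

lemma enGS_hasDerivAt (hd : 1 ≤ d) {r : ℝ} (h0 : 0 < r) (h1 : r < 1) :
    HasDerivAt (enGS d) (fermiLevel d r) r := by
  rw [hasDerivAt_iff_tendsto_slope, Metric.tendsto_nhdsWithin_nhds]
  intro ε hε
  obtain ⟨δ₁, hδ₁pos, hδ₁⟩ := fermi_cont hd h0 h1 ε hε
  refine ⟨min δ₁ (min (r / 2) ((1 - r) / 2)), lt_min hδ₁pos (lt_min (by linarith) (by linarith)), fun {x} hxne hdist => ?_⟩
  rw [Real.dist_eq] at hdist
  have hd1 : |x - r| < δ₁ := lt_of_lt_of_le hdist (min_le_left _ _)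
  have hd2 : |x - r| < r / 2 :=
    lt_of_lt_of_le hdist (le_trans (min_le_right _ _) (min_le_left _ _))
  have hd3 : |x - r| < (1 - r) / 2 :=
    lt_of_lt_of_le hdist (le_trans (min_le_right _ _) (min_le_right _ _))
  have hx0 : 0 < x := by have := abs_lt.1 hd2; linarith [this.1]
  have hx1 : x ≤ 1 := by have := abs_lt.1 hd3; linarith [this.2]
  have hμcont : |fermiLevel d x - fermiLevel d r| < ε := hδ₁ x hx0 hx1 hd1
  have hxner : x ≠ r := hxne
  rw [Real.dist_eq, slope_def_field]
  rcases lt_or_gt_of_ne hxner with hlt | hgt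
  · -- x < r
    obtain ⟨hl, hh⟩ := enGS_diff hd hx0 (le_of_lt hlt) (le_of_lt h1)
    have hrx : 0 < r - x := by linarith
    have hs1 : fermiLevel d x ≤ (enGS d x - enGS d r) / (x - r) := by
      rw [le_div_iff_of_neg (by linarith : x - r < 0)]
      linarith
    have hs2 : (enGS d x - enGS d r) / (x - r) ≤ fermiLevel d r := by
      rw [div_le_iff_of_neg (by linarith : x - r < 0)]
      linarith
    have habs := abs_lt.1 hμcont
    rw [abs_lt]
    constructor <;> linarith
  · -- r < x
    obtain ⟨hl, hh⟩ := enGS_diff hd h0 (le_of_lt hgt) hx1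
    have hrx : 0 < x - r := by linarith
    have hs1 : fermiLevel d r ≤ (enGS d x - enGS d r) / (x - r) := by
      rw [le_div_iff₀ hrx]
      linarith
    have hs2 : (enGS d x - enGS d r) / (x - r) ≤ fermiLevel d x := by
      rw [div_le_iff₀ hrx]
      linarith
    have habs := abs_lt.1 hμcont
    rw [abs_lt]
    constructor <;> linarith

lemma enGS_contOn (hd : 1 ≤ d) {ρ : ℝ} (h0 : 0 < ρ) :
    ContinuousOn (enGS d) (Set.Icc ρ 1) := by
  have hK : (0:ℝ) ≤ 4 * d := by positivity
  apply LipschitzOnWith.continuousOn (K := Real.toNNReal (4 * d))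
  rw [lipschitzOnWith_iff_dist_le_mul]
  intro x hx y hy
  rw [Real.dist_eq, Real.dist_eq, Real.coe_toNNReal _ hK]
  rcases le_total x y with h | h
  · have := enGS_lipschitz hd (lt_of_lt_of_le h0 hx.1) h hy.2
    rw [abs_sub_comm x y, abs_sub_comm (enGS d x) (enGS d y),
      abs_of_nonneg (by linarith : (0:ℝ) ≤ y - x)]
    linarith
  · have := enGS_lipschitz hd (lt_of_lt_of_le h0 hy.1) h hx.2
    rw [abs_of_nonneg (by linarith : (0:ℝ) ≤ x - y)]
    linarith

end Fermi

open Fermi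

/-- For `d ≥ 1` and `ρ ∈ (0,1)`, the function `g(α) = (1−α)·e(ρ/(1−α))` is convex on
`[0, 1−ρ]`, differentiable on the interior with derivative `g′(α) = ξ(ρ/(1−α))`, and
satisfies `g(α) ≥ e(ρ) + α·ξ(ρ)` on `[0, 1−ρ]`. -/
theorem convexity_of_diluted_energy (d : ℕ) (hd : 1 ≤ d) (ρ : ℝ)
    (h0 : 0 < ρ) (h1 : ρ < 1) :
    ConvexOn ℝ (Set.Icc 0 (1 - ρ)) (fun α => (1 - α) * enGS d (ρ / (1 - α))) ∧
    (∀ α ∈ Set.Ioo (0 : ℝ) (1 - ρ),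
      HasDerivAt (fun α => (1 - α) * enGS d (ρ / (1 - α))) (xiFun d (ρ / (1 - α))) α) ∧
    (∀ α ∈ Set.Icc (0 : ℝ) (1 - ρ),
      (1 - α) * enGS d (ρ / (1 - α)) ≥ enGS d ρ + α * xiFun d ρ) := by
  have h1ρ : 0 < 1 - ρ := by linarith
  -- the derivative statement
  have hderiv : ∀ α ∈ Set.Ioo (0 : ℝ) (1 - ρ),
      HasDerivAt (fun α => (1 - α) * enGS d (ρ / (1 - α))) (xiFun d (ρ / (1 - α))) α := by
    intro α hα
    obtain ⟨hα0, hα1⟩ := hα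
    have h1α : 0 < 1 - α := by linarith
    have h1α1 : 1 - α < 1 := by linarith
    set r := ρ / (1 - α) with hrdef
    have hr0 : 0 < r := by positivity
    have hr1 : r < 1 := by
      rw [hrdef, div_lt_one h1α]; linarith
    have hden : HasDerivAt (fun β : ℝ => 1 - β) (-1) α := by
      simpa using (hasDerivAt_id α).const_sub 1
    have hquot : HasDerivAt (fun β : ℝ => ρ / (1 - β)) (ρ / (1 - α) ^ 2) α := by
      have h := (hasDerivAt_const α ρ).fun_div hden (ne_of_gt h1α)
      exact h.congr_deriv (by ring)
    have hE := enGS_hasDerivAt hd hr0 hr1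
    have hcomp := HasDerivAt.comp α hE hquot
    have hmul := HasDerivAt.mul hden hcomp
    have heq : -1 * (enGS d ∘ fun β => ρ / (1 - β)) α
        + (1 - α) * (fermiLevel d r * (ρ / (1 - α) ^ 2)) = xiFun d r := by
      have hr2 : (1 - α) * (ρ / (1 - α) ^ 2) = r := by
        rw [hrdef]; field_simp
      unfold xiFun
      have hc : (enGS d ∘ fun β => ρ / (1 - β)) α = enGS d r := rfl
      have h3 : (1 - α) * (fermiLevel d r * (ρ / (1 - α) ^ 2)) = fermiLevel d r * r := by
        rw [mul_comm (fermiLevel d r) _, ← mul_assoc, hr2, mul_comm]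
      rw [hc, h3]
      ring
    rw [heq] at hmul
    exact hmul
  -- mapsTo for continuity
  have hmaps : Set.MapsTo (fun α : ℝ => ρ / (1 - α)) (Set.Icc 0 (1 - ρ)) (Set.Icc ρ 1) := by
    intro α hα
    have h1α : 0 < 1 - α := by
      rcases hα with ⟨_, h⟩; linarith
    constructor
    · rw [le_div_iff₀ h1α]
      rcases hα with ⟨h, _⟩; nlinarith
    · rw [div_le_one h1α]
      rcases hα with ⟨_, h⟩; linarith
  have hcont : ContinuousOn (fun α : ℝ => (1 - α) * enGS d (ρ / (1 - α)))
      (Set.Icc 0 (1 - ρ)) := by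
    apply ContinuousOn.mul
    · exact (continuous_const.sub continuous_id).continuousOn
    · apply ContinuousOn.comp (enGS_contOn hd h0) ?_ hmaps
      apply ContinuousOn.div continuousOn_const
        ((continuous_const.sub continuous_id).continuousOn)
      intro α hα
      rcases hα with ⟨_, h⟩
      have : 0 < 1 - α := by linarith
      exact ne_of_gt this
  have hconv : ConvexOn ℝ (Set.Icc 0 (1 - ρ))
      (fun α => (1 - α) * enGS d (ρ / (1 - α))) := by
    apply MonotoneOn.convexOn_of_deriv (convex_Icc 0 (1 - ρ)) hcont
    · rw [interior_Icc]
      intro α hα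
      exact (hderiv α hα).differentiableAt.differentiableWithinAt
    · rw [interior_Icc]
      intro a ha b hb hab
      rw [(hderiv a ha).deriv, (hderiv b hb).deriv]
      have h1a : 0 < 1 - a := by rcases ha with ⟨_, h⟩; linarith
      have h1b : 0 < 1 - b := by rcases hb with ⟨_, h⟩; linarith
      have hra0 : 0 < ρ / (1 - a) := by positivity
      have hrab : ρ / (1 - a) ≤ ρ / (1 - b) := by
        gcongr <;> linarith
      have hrb1 : ρ / (1 - b) ≤ 1 := by
        rw [div_le_one h1b]; rcases hb with ⟨_, h⟩; linarith
      exact xi_mono hd hra0 hrab hrb1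
  refine ⟨hconv, hderiv, ?_⟩
  intro α hα
  obtain ⟨hα0, hα1⟩ := hα
  have h1α : 0 < 1 - α := by linarith
  set r := ρ / (1 - α) with hrdef
  have hρr : ρ ≤ r := by
    rw [hrdef, le_div_iff₀ h1α]; nlinarith
  have hr1 : r ≤ 1 := by
    rw [hrdef, div_le_one h1α]; linarith
  have hkey : (1 - α) * r = ρ := by
    rw [hrdef]; field_simp
  have hl := (enGS_diff hd h0 hρr hr1).1
  have hkey2 : (1 - α) * (r * fermiLevel d ρ) = ρ * fermiLevel d ρ := by
    rw [← mul_assoc, hkey]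
  unfold xiFun
  nlinarith [mul_le_mul_of_nonneg_left hl (le_of_lt h1α)]
end
end

section
/- Fix an integer d ≥ 1, a parameter t ∈ [0,1], and densities ρ1, ρ2 > 0 with ρ1 + ρ2 < 1. Define the segregated energy per site E(ν) = (1−ν)·e(ρ1/(1−ν)) + t·ν·e(ρ2/ν) for ν ∈ [ρ2, 1−ρ1]. Then E is convex on [ρ2, 1−ρ1] and differentiable on its interior with derivative E′(ν) = ξ(ρ1/(1−ν)) − t·ξ(ρ2/ν). -/
open scoped BigOperators

noncomputable section

open MeasureTheory Real Set Filter Topology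

lemma cos_level_closed (c : ℝ) : IsClosed {x : ℝ | |x| ≤ π ∧ Real.cos x = c} :=
  (isClosed_le continuous_abs continuous_const).inter
    (isClosed_eq Real.continuous_cos continuous_const)

lemma cos_level_null (c : ℝ) : volume {x : ℝ | |x| ≤ π ∧ Real.cos x = c} = 0 := by
  have hsub : {x : ℝ | |x| ≤ π ∧ Real.cos x = c} ⊆ {Real.arccos c, -Real.arccos c} := by
    rintro x ⟨hx, hc⟩
    have h1 : Real.arccos c = |x| := by
      rw [← hc, ← Real.cos_abs x]
      exact Real.arccos_cos (abs_nonneg x) hx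
    rcases abs_cases x with ⟨h, _⟩ | ⟨h, _⟩
    · left; rw [h1, h]
    · right; simp [h1, h]
  exact measure_mono_null hsub (((Set.finite_singleton _).insert _).measure_zero volume)

lemma sumcos_level_closed (n : ℕ) (c : ℝ) :
    IsClosed {y : Fin n → ℝ | (∀ j, |y j| ≤ π) ∧ (∑ j, Real.cos (y j)) = c} := by
  have : {y : Fin n → ℝ | (∀ j, |y j| ≤ π) ∧ (∑ j, Real.cos (y j)) = c}
      = (⋂ j, {y : Fin n → ℝ | |y j| ≤ π}) ∩ {y | (∑ j, Real.cos (y j)) = c} := by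
    ext y; simp [Set.mem_iInter]
  rw [this]
  exact (isClosed_iInter fun j =>
      isClosed_le ((continuous_apply j).abs) continuous_const).inter
    (isClosed_eq (continuous_finset_sum _ fun j _ =>
      Real.continuous_cos.comp (continuous_apply j)) continuous_const)

lemma sumcos_level_null : ∀ (n : ℕ) (c : ℝ),
    volume {y : Fin (n+1) → ℝ | (∀ j, |y j| ≤ π) ∧ (∑ j, Real.cos (y j)) = c} = 0 := by
  intro n
  induction n with
  | zero =>
    intro c
    have hmp := MeasureTheory.volume_preserving_funUnique (Fin 1) ℝ
    have heq : {y : Fin 1 → ℝ | (∀ j, |y j| ≤ π) ∧ (∑ j, Real.cos (y j)) = c}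
        = (MeasurableEquiv.funUnique (Fin 1) ℝ) ⁻¹' {x : ℝ | |x| ≤ π ∧ Real.cos x = c} := by
      ext y
      simp [MeasurableEquiv.funUnique, Fin.forall_fin_one, Fin.sum_univ_one]
    rw [heq]
    exact (hmp.measure_preimage (cos_level_closed c).measurableSet.nullMeasurableSet).trans (cos_level_null c)
  | succ m ih =>
    intro c
    have hmp := (MeasureTheory.volume_preserving_piFinSuccAbove (fun _ : Fin (m+2) => ℝ) 0).symm
    set T := MeasurableEquiv.piFinSuccAbove (fun _ : Fin (m+2) => ℝ) 0 with hT
    set S := {y : Fin (m+2) → ℝ | (∀ j, |y j| ≤ π) ∧ (∑ j, Real.cos (y j)) = c} with hSdef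
    have hS : MeasurableSet S := (sumcos_level_closed (m+2) c).measurableSet
    have hpre : volume S = volume (T.symm ⁻¹' S) := (hmp.measure_preimage_equiv S).symm
    rw [hpre]
    have hmeas : MeasurableSet (T.symm ⁻¹' S) := T.symm.measurable hS
    rw [show (volume : Measure (ℝ × (Fin (m+1) → ℝ))) = (volume : Measure ℝ).prod volume from rfl]
    rw [MeasureTheory.Measure.measure_prod_null hmeas]
    refine Filter.Eventually.of_forall fun x => ?_
    have hslice : (Prod.mk x ⁻¹' (T.symm ⁻¹' S)) ⊆
        {z : Fin (m+1) → ℝ | (∀ j, |z j| ≤ π) ∧ (∑ j, Real.cos (z j)) = c - Real.cos x} := by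
      intro z hz
      simp only [Set.mem_preimage, hSdef, Set.mem_setOf_eq] at hz
      obtain ⟨hb, hs⟩ := hz
      have hy : ∀ i, T.symm (x, z) i = (Fin.cons x z : Fin (m+2) → ℝ) i := by
        intro i
        rw [hT]
        simp only [MeasurableEquiv.piFinSuccAbove_symm_apply]
        refine Fin.cases ?_ (fun j => ?_) i
        · simp
        · simp [Fin.insertNthEquiv]
      simp only [hy] at hb hs
      rw [Fin.sum_univ_succ] at hs
      simp only [Fin.cons_zero, Fin.cons_succ] at hs
      refine ⟨fun j => ?_, by linarith⟩
      have := hb j.succ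
      simpa using this
    exact measure_mono_null hslice (ih (c - Real.cos x))

def Aset (d : ℕ) (E : ℝ) : Set (Fin d → ℝ) := {k | inBZ d k ∧ epsk d k < E}
def Bset (d : ℕ) : Set (Fin d → ℝ) := {k | inBZ d k}

lemma epsk_continuous (d : ℕ) : Continuous (epsk d) := by
  unfold epsk
  exact continuous_const.sub (continuous_const.mul
    (continuous_finset_sum _ fun i _ => Real.continuous_cos.comp (continuous_apply i)))

lemma epsk_nonneg (d : ℕ) (k : Fin d → ℝ) : 0 ≤ epsk d k := by
  unfold epsk
  have : ∑ i, Real.cos (k i) ≤ ∑ _i : Fin d, (1:ℝ) :=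
    Finset.sum_le_sum fun i _ => Real.cos_le_one (k i)
  simp only [Finset.sum_const, Finset.card_univ, Fintype.card_fin, nsmul_eq_mul, mul_one] at this
  linarith

lemma epsk_le (d : ℕ) (k : Fin d → ℝ) : epsk d k ≤ 4 * d := by
  unfold epsk
  have : ∑ _i : Fin d, (-1:ℝ) ≤ ∑ i, Real.cos (k i) :=
    Finset.sum_le_sum fun i _ => Real.neg_one_le_cos (k i)
  simp only [Finset.sum_const, Finset.card_univ, Fintype.card_fin, nsmul_eq_mul, mul_neg_one] at this
  linarith

lemma Bset_eq (d : ℕ) : Bset d = Set.pi Set.univ (fun _ : Fin d => Icc (-π) π) := by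
  ext k
  simp only [Bset, inBZ, Set.mem_setOf_eq, Set.mem_pi, Set.mem_univ, forall_true_left,
    Set.mem_Icc, abs_le]

lemma Bset_closed (d : ℕ) : IsClosed (Bset d) := by
  rw [Bset_eq]
  exact isClosed_set_pi fun i _ => isClosed_Icc

lemma Bset_vol (d : ℕ) : volume (Bset d) = ENNReal.ofReal ((2*π)^d) := by
  rw [Bset_eq, volume_pi_pi]
  simp only [Real.volume_Icc, sub_neg_eq_add]
  rw [Finset.prod_const, Finset.card_univ, Fintype.card_fin,
    ← ENNReal.ofReal_pow (by positivity)]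
  norm_num
  ring_nf

lemma Aset_meas (d : ℕ) (E : ℝ) : MeasurableSet (Aset d E) :=
  ((Bset_closed d).measurableSet).inter ((isOpen_lt (epsk_continuous d) continuous_const).measurableSet)

lemma Aset_subset (d : ℕ) (E : ℝ) : Aset d E ⊆ Bset d := fun k hk => hk.1

lemma Bset_fin (d : ℕ) : volume (Bset d) ≠ ⊤ := by
  rw [Bset_vol]; exact ENNReal.ofReal_ne_top

lemma Aset_fin (d : ℕ) (E : ℝ) : volume (Aset d E) ≠ ⊤ := by
  have h : volume (Aset d E) ≤ volume (Bset d) := measure_mono (Aset_subset d E)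
  rw [Bset_vol] at h
  exact (h.trans_lt ENNReal.ofReal_lt_top).ne

lemma Aset_mono (d : ℕ) {E E' : ℝ} (h : E ≤ E') : Aset d E ⊆ Aset d E' :=
  fun k hk => ⟨hk.1, lt_of_lt_of_le hk.2 h⟩

lemma level_null (d : ℕ) (hd : 1 ≤ d) (E : ℝ) :
    volume {k : Fin d → ℝ | inBZ d k ∧ epsk d k = E} = 0 := by
  obtain ⟨n, rfl⟩ : ∃ n, d = n + 1 := ⟨d - 1, (Nat.succ_pred_eq_of_pos hd).symm⟩
  have : {k : Fin (n+1) → ℝ | inBZ (n+1) k ∧ epsk (n+1) k = E}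
      = {y : Fin (n+1) → ℝ | (∀ j, |y j| ≤ π) ∧ (∑ j, Real.cos (y j)) = (2*(n+1:ℝ) - E)/2} := by
    ext y
    simp only [Set.mem_setOf_eq, inBZ, epsk]
    constructor
    · rintro ⟨h1, h2⟩; exact ⟨h1, by push_cast at h2 ⊢; linarith⟩
    · rintro ⟨h1, h2⟩; exact ⟨h1, by push_cast at h2 ⊢; linarith⟩
  rw [this]
  exact sumcos_level_null n _

lemma volBelow_eq (d : ℕ) (E : ℝ) : volBelow d E = (volume (Aset d E)).toReal := rfl

lemma volBelow_mono (d : ℕ) : Monotone (volBelow d) := by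
  intro E E' h
  rw [volBelow_eq, volBelow_eq]
  exact ENNReal.toReal_mono (Aset_fin d E') (measure_mono (Aset_mono d h))

lemma volBelow_nonneg (d : ℕ) (E : ℝ) : 0 ≤ volBelow d E := ENNReal.toReal_nonneg

lemma volBelow_diff (d : ℕ) {E₀ E : ℝ} (h : E₀ ≤ E) :
    volBelow d E - volBelow d E₀ = (volume (Aset d E \ Aset d E₀)).toReal := by
  rw [volBelow_eq, volBelow_eq,
    measure_diff (Aset_mono d h) (Aset_meas d E₀).nullMeasurableSet (Aset_fin d E₀),
    ENNReal.toReal_sub_of_le (measure_mono (Aset_mono d h)) (Aset_fin d E)]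

lemma volBelow_nonpos (d : ℕ) {E : ℝ} (hE : E ≤ 0) : volBelow d E = 0 := by
  have : Aset d E = ∅ := by
    ext k
    simp only [Aset, Set.mem_setOf_eq, Set.mem_empty_iff_false, iff_false, not_and, not_lt]
    exact fun _ => hE.trans (epsk_nonneg d k)
  rw [volBelow_eq, this]
  simp

lemma volBelow_ge (d : ℕ) (hd : 1 ≤ d) {E : ℝ} (hE : 4 * d ≤ E) :
    volBelow d E = (2*π)^d := by
  have hsub : Bset d ⊆ Aset d E ∪ {k : Fin d → ℝ | inBZ d k ∧ epsk d k = 4 * d} := by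
    intro k hk
    rcases lt_or_ge (epsk d k) E with h | h
    · exact Or.inl ⟨hk, h⟩
    · exact Or.inr ⟨hk, le_antisymm (epsk_le d k) (hE.trans h)⟩
  have h1 : volume (Bset d) ≤ volume (Aset d E) := by
    calc volume (Bset d) ≤ volume (Aset d E ∪ _) := measure_mono hsub
    _ ≤ volume (Aset d E) + volume {k : Fin d → ℝ | inBZ d k ∧ epsk d k = 4 * d} :=
        measure_union_le _ _
    _ = volume (Aset d E) := by rw [level_null d hd]; simp
  have h2 : volume (Aset d E) = volume (Bset d) :=
    le_antisymm (measure_mono (Aset_subset d E)) h1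
  rw [volBelow_eq, h2, Bset_vol, ENNReal.toReal_ofReal (by positivity)]

lemma volBelow_continuous (d : ℕ) (hd : 1 ≤ d) : Continuous (volBelow d) := by
  rw [Metric.continuous_iff]
  intro E₀ ε hε
  set W : ℕ → Set (Fin d → ℝ) :=
    fun n => {k | inBZ d k ∧ E₀ - 1/(n+1) ≤ epsk d k ∧ epsk d k ≤ E₀ + 1/(n+1)} with hW
  have hWmeas : ∀ n, NullMeasurableSet (W n) volume := by
    intro n
    refine MeasurableSet.nullMeasurableSet ?_
    exact ((Bset_closed d).measurableSet).inter
      (((measurableSet_le measurable_const (epsk_continuous d).measurable)).inter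
       (measurableSet_le (epsk_continuous d).measurable measurable_const))
  have hWanti : Antitone W := by
    intro n m hnm k hk
    obtain ⟨h1, h2, h3⟩ := hk
    have hle : 1/((m:ℝ)+1) ≤ 1/((n:ℝ)+1) := by
      apply one_div_le_one_div_of_le (by positivity)
      exact_mod_cast Nat.succ_le_succ hnm
    exact ⟨h1, by linarith, by linarith⟩
  have hWfin : ∃ n, volume (W n) ≠ ⊤ := by
    refine ⟨0, ?_⟩
    have h : volume (W 0) ≤ volume (Bset d) := measure_mono fun k hk => hk.1
    rw [Bset_vol] at h
    exact (h.trans_lt ENNReal.ofReal_lt_top).ne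
  have hWint : (⋂ n, W n) = {k : Fin d → ℝ | inBZ d k ∧ epsk d k = E₀} := by
    ext k
    simp only [Set.mem_iInter, hW, Set.mem_setOf_eq]
    constructor
    · intro h
      refine ⟨(h 0).1, ?_⟩
      have hb : ∀ n : ℕ, |epsk d k - E₀| ≤ 1/(n+1) := by
        intro n
        obtain ⟨_, h2, h3⟩ := h n
        rw [abs_le]
        constructor <;> linarith
      have h0 : |epsk d k - E₀| ≤ 0 := by
        by_contra hpos
        push_neg at hpos
        obtain ⟨n, hn⟩ := exists_nat_one_div_lt hpos
        exact absurd (hb n) (not_le.mpr hn)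
      have := abs_nonneg (epsk d k - E₀)
      have : |epsk d k - E₀| = 0 := le_antisymm h0 this
      rw [abs_eq_zero] at this
      linarith
    · rintro ⟨h1, h2⟩ n
      have hp : (0:ℝ) < 1/(n+1) := by positivity
      exact ⟨h1, by rw [h2]; constructor <;> linarith⟩
  have htend : Tendsto (fun n => volume (W n)) atTop (𝓝 0) := by
    have := tendsto_measure_iInter_atTop hWmeas hWanti hWfin
    rw [hWint, level_null d hd] at this
    exact this
  obtain ⟨n, hn⟩ : ∃ n, volume (W n) < ENNReal.ofReal ε :=
    (htend.eventually_lt_const (show (0:ENNReal) < ENNReal.ofReal ε by simp [hε])).exists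
  refine ⟨1/(n+1), by positivity, fun E hE => ?_⟩
  rw [Real.dist_eq] at hE ⊢
  have key : ∀ {Ea Eb : ℝ}, Ea ≤ Eb → Eb - E₀ ≤ 1/(n+1) → E₀ - Ea ≤ 1/(n+1) →
      volBelow d Eb - volBelow d Ea ≤ (volume (W n)).toReal := by
    intro Ea Eb hab h1 h2
    rw [volBelow_diff d hab]
    refine ENNReal.toReal_mono (hn.trans ENNReal.ofReal_lt_top).ne (measure_mono ?_)
    rintro k ⟨⟨hkB, hklt⟩, hknot⟩
    have hge : Ea ≤ epsk d k := by
      by_contra hlt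
      exact hknot ⟨hkB, by linarith⟩
    exact ⟨hkB, by linarith, by linarith⟩
  have hWn : (volume (W n)).toReal < ε := by
    rw [← ENNReal.ofReal_toReal (hn.trans ENNReal.ofReal_lt_top).ne] at hn
    exact (ENNReal.ofReal_lt_ofReal_iff hε).mp hn
  have habs := abs_le.mp hE.le
  rcases le_total E E₀ with h | h
  · have := key h (by linarith) (by linarith)
    have hm := volBelow_mono d h
    rw [abs_lt]
    constructor <;> linarith
  · have := key h (by linarith) (by linarith)
    have hm := volBelow_mono d h
    rw [abs_lt]
    constructor <;> linarith

lemma volBelow_strict (d : ℕ) (hd : 1 ≤ d) {E1 E2 : ℝ} (h0 : 0 ≤ E1) (h12 : E1 < E2)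
    (h4 : E2 ≤ 4 * d) : volBelow d E1 < volBelow d E2 := by
  set m := (E1 + E2) / 2 with hm
  have hdpos : (0:ℝ) < d := by exact_mod_cast hd
  have hm1 : E1 < m := by rw [hm]; linarith
  have hm2 : m < E2 := by rw [hm]; linarith
  -- find s ∈ [0,1] with 2d(1 - cos (s π)) = m
  have hcont : ContinuousOn (fun s : ℝ => 2 * d * (1 - Real.cos (s * π))) (Icc 0 1) :=
    (continuous_const.mul (continuous_const.sub
      (Real.continuous_cos.comp (continuous_id.mul continuous_const)))).continuousOn
  have hiv := intermediate_value_Icc (by norm_num : (0:ℝ) ≤ 1) hcont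
  have hmem : m ∈ Icc ((fun s : ℝ => 2 * d * (1 - Real.cos (s * π))) 0)
      ((fun s : ℝ => 2 * d * (1 - Real.cos (s * π))) 1) := by
    simp only [zero_mul, Real.cos_zero, one_mul, Real.cos_pi]
    constructor
    · simp; nlinarith
    · nlinarith
  obtain ⟨s, hs01, hsm⟩ := hiv hmem
  have hspos : 0 < s := by
    rcases eq_or_lt_of_le hs01.1 with h | h
    · exfalso; rw [← h] at hsm; simp at hsm; nlinarith
    · exact h
  have hslt : s < 1 := by
    rcases eq_or_lt_of_le hs01.2 with h | h
    · exfalso; rw [h] at hsm; simp [Real.cos_pi] at hsm; nlinarith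
    · exact h
  -- the point k0
  set k0 : Fin d → ℝ := fun _ => s * π with hk0
  have hval : epsk d k0 = m := by
    unfold epsk
    rw [hk0]
    simp only [Finset.sum_const, Finset.card_univ, Fintype.card_fin, nsmul_eq_mul]
    simp only at hsm
    ring_nf
    ring_nf at hsm
    linarith
  -- open set
  set U : Set (Fin d → ℝ) := {k | (∀ i, |k i| < π) ∧ E1 < epsk d k ∧ epsk d k < E2} with hU
  have hUopen : IsOpen U := by
    have h1 : IsOpen {k : Fin d → ℝ | ∀ i, |k i| < π} := by
      have : {k : Fin d → ℝ | ∀ i, |k i| < π} = ⋂ i, {k : Fin d → ℝ | |k i| < π} := by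
        ext k; simp [Set.mem_iInter]
      rw [this]
      exact isOpen_iInter_of_finite fun i =>
        isOpen_lt ((continuous_apply i).abs) continuous_const
    exact h1.inter ((isOpen_lt continuous_const (epsk_continuous d)).inter
      (isOpen_lt (epsk_continuous d) continuous_const))
  have hk0U : k0 ∈ U := by
    refine ⟨fun i => ?_, ?_, ?_⟩
    · show |s * π| < π
      rw [abs_of_pos (by positivity)]
      nlinarith [Real.pi_pos]
    · rw [hval]; exact hm1
    · rw [hval]; exact hm2
  have hUvol : 0 < volume U := hUopen.measure_pos volume ⟨k0, hk0U⟩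
  have hUsub : U ⊆ Aset d E2 \ Aset d E1 := by
    rintro k ⟨hb, h1, h2⟩
    exact ⟨⟨fun i => (hb i).le, h2⟩, fun hk => absurd hk.2 (not_lt.mpr h1.le)⟩
  have hlt : 0 < (volume (Aset d E2 \ Aset d E1)).toReal := by
    refine ENNReal.toReal_pos (fun h => ?_) ?_
    · exact absurd (measure_mono_null hUsub h) hUvol.ne'
    · exact ((measure_mono ((Set.diff_subset).trans (Aset_subset d E2))).trans_lt
        (by rw [Bset_vol]; exact ENNReal.ofReal_lt_top)).ne
  have := volBelow_diff d h12.le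
  linarith

lemma twopi_pos (d : ℕ) : (0:ℝ) < (2*π)^d := by positivity

section fermi

variable {d : ℕ} (hd : 1 ≤ d)

lemma Sset_lb {ρ : ℝ} (hρ : 0 < ρ) :
    ∀ E ∈ {E : ℝ | ρ ≤ volBelow d E / (2 * π) ^ d}, (0:ℝ) ≤ E := by
  intro E hE
  by_contra h
  push_neg at h
  rw [Set.mem_setOf_eq, volBelow_nonpos d h.le] at hE
  simp only [zero_div] at hE
  linarith

include hd in
lemma Sset_mem4d {ρ : ℝ} (hρ1 : ρ ≤ 1) :
    (4*(d:ℝ)) ∈ {E : ℝ | ρ ≤ volBelow d E / (2 * π) ^ d} := by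
  rw [Set.mem_setOf_eq, volBelow_ge d hd le_rfl, div_self (twopi_pos d).ne']
  exact hρ1

include hd in
lemma fermiLevel_nonneg {ρ : ℝ} (hρ : 0 < ρ) (hρ1 : ρ ≤ 1) : 0 ≤ fermiLevel d ρ :=
  le_csInf ⟨_, Sset_mem4d hd hρ1⟩ (Sset_lb hρ)

include hd in
lemma fermiLevel_le4d {ρ : ℝ} (hρ : 0 < ρ) (hρ1 : ρ ≤ 1) : fermiLevel d ρ ≤ 4 * d :=
  csInf_le ⟨0, Sset_lb hρ⟩ (Sset_mem4d hd hρ1)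

include hd in
lemma fermiLevel_solves {ρ : ℝ} (hρ : 0 < ρ) (hρ1 : ρ ≤ 1) :
    volBelow d (fermiLevel d ρ) / (2 * π) ^ d = ρ := by
  set S := {E : ℝ | ρ ≤ volBelow d E / (2 * π) ^ d} with hS
  set F := fermiLevel d ρ with hF
  have hSne : S.Nonempty := ⟨_, Sset_mem4d hd hρ1⟩
  have hSbdd : BddBelow S := ⟨0, Sset_lb hρ⟩
  have hNcont : Continuous (fun E => volBelow d E / (2 * π) ^ d) :=
    (volBelow_continuous d hd).div_const _
  refine le_antisymm ?_ ?_
  · -- N F ≤ ρ : approach from the left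
    have hev : ∀ E < F, volBelow d E / (2 * π) ^ d ≤ ρ := by
      intro E hE
      by_contra hcon
      push_neg at hcon
      exact absurd (csInf_le hSbdd (le_of_lt hcon : ρ ≤ _)) (not_le.mpr hE)
    refine le_of_tendsto ((hNcont.tendsto F).mono_left nhdsWithin_le_nhds :
      Tendsto _ (nhdsWithin F (Set.Iio F)) _) ?_
    filter_upwards [self_mem_nhdsWithin] with E hE
    exact hev E hE
  · -- ρ ≤ N F : approach from the right
    have hev : ∀ E > F, ρ ≤ volBelow d E / (2 * π) ^ d := by
      intro E hE
      obtain ⟨E', hE'S, hE'lt⟩ := (csInf_lt_iff hSbdd hSne).mp hE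
      exact le_trans hE'S ((div_le_div_iff_of_pos_right (twopi_pos d)).mpr (volBelow_mono d hE'lt.le))
    refine ge_of_tendsto ((hNcont.tendsto F).mono_left nhdsWithin_le_nhds :
      Tendsto _ (nhdsWithin F (Set.Ioi F)) _) ?_
    filter_upwards [self_mem_nhdsWithin] with E hE
    exact hev E hE

end fermi

section fermi2

variable {d : ℕ} (hd : 1 ≤ d)

include hd in
lemma fermiLevel_mono {ρ ρ' : ℝ} (hρ : 0 < ρ) (h : ρ ≤ ρ') (h1 : ρ' ≤ 1) :
    fermiLevel d ρ ≤ fermiLevel d ρ' := by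
  apply csInf_le_csInf ⟨0, Sset_lb hρ⟩ ⟨_, Sset_mem4d hd h1⟩
  intro E hE
  exact le_trans h hE

include hd in
lemma fermiLevel_lt4d {ρ : ℝ} (hρ : 0 < ρ) (hρ1 : ρ < 1) : fermiLevel d ρ < 4 * d := by
  rcases eq_or_lt_of_le (fermiLevel_le4d hd hρ hρ1.le) with h | h
  · exfalso
    have := fermiLevel_solves hd hρ hρ1.le
    rw [h, volBelow_ge d hd le_rfl, div_self (twopi_pos d).ne'] at this
    linarith
  · exact h

include hd in
lemma fermiLevel_approx {ρ₀ : ℝ} (hρ₀ : 0 < ρ₀) (hρ₀1 : ρ₀ < 1) {ε : ℝ} (hε : 0 < ε) :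
    ∃ δ > 0, ∀ ρ, 0 < ρ → ρ ≤ 1 → |ρ - ρ₀| < δ → |fermiLevel d ρ - fermiLevel d ρ₀| ≤ ε := by
  set F := fermiLevel d ρ₀ with hF
  have hF0 : 0 ≤ F := fermiLevel_nonneg hd hρ₀ hρ₀1.le
  have hF4 : F < 4 * d := fermiLevel_lt4d hd hρ₀ hρ₀1
  have hsol : volBelow d F / (2 * π) ^ d = ρ₀ := fermiLevel_solves hd hρ₀ hρ₀1.le
  -- upper bound
  set Ep := min (F + ε) (4 * (d:ℝ)) with hEp
  have hEpgt : F < Ep := lt_min (by linarith) hF4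
  have hEple : Ep ≤ 4 * d := min_le_right _ _
  have hNEp : ρ₀ < volBelow d Ep / (2 * π) ^ d := by
    rw [← hsol]
    exact (div_lt_div_iff_of_pos_right (twopi_pos d)).mpr (volBelow_strict d hd hF0 hEpgt hEple)
  set δ₁ := volBelow d Ep / (2 * π) ^ d - ρ₀ with hδ₁
  have hδ₁pos : 0 < δ₁ := by rw [hδ₁]; linarith
  -- lower bound
  have hlower : ∃ δ₂ > 0, ∀ ρ, 0 < ρ → ρ ≤ 1 → ρ₀ - δ₂ < ρ → F - ε ≤ fermiLevel d ρ := by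
    rcases le_or_gt F ε with h | h
    · exact ⟨1, one_pos, fun ρ hρ hρ1 _ => le_trans (by linarith)
        (fermiLevel_nonneg hd hρ hρ1)⟩
    · set Em := F - ε with hEm
      have hEm0 : 0 ≤ Em := by rw [hEm]; linarith
      have hNEm : volBelow d Em / (2 * π) ^ d < ρ₀ := by
        rw [← hsol]
        exact (div_lt_div_iff_of_pos_right (twopi_pos d)).mpr
          (volBelow_strict d hd hEm0 (by rw [hEm]; linarith) (by linarith))
      refine ⟨ρ₀ - volBelow d Em / (2 * π) ^ d, by linarith, fun ρ hρ hρ1 hρgt => ?_⟩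
      have hgt : volBelow d Em / (2 * π) ^ d < ρ := by linarith
      refine le_csInf ⟨_, Sset_mem4d hd hρ1⟩ ?_
      intro E hE
      by_contra hcon
      push_neg at hcon
      have : volBelow d E / (2 * π) ^ d ≤ volBelow d Em / (2 * π) ^ d :=
        (div_le_div_iff_of_pos_right (twopi_pos d)).mpr (volBelow_mono d hcon.le)
      rw [Set.mem_setOf_eq] at hE
      linarith
  obtain ⟨δ₂, hδ₂pos, hδ₂⟩ := hlower
  refine ⟨min δ₁ δ₂, lt_min hδ₁pos hδ₂pos, fun ρ hρ hρ1 habs => ?_⟩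
  obtain ⟨hl, hr⟩ := abs_lt.mp habs
  have hup : fermiLevel d ρ ≤ F + ε := by
    have hρlt : ρ ≤ volBelow d Ep / (2 * π) ^ d := by
      have := lt_of_lt_of_le hr (min_le_left δ₁ δ₂)
      rw [hδ₁] at this
      linarith
    exact le_trans (csInf_le ⟨0, Sset_lb hρ⟩ hρlt) (min_le_left _ _)
  have hlo : F - ε ≤ fermiLevel d ρ :=
    hδ₂ ρ hρ hρ1 (by have h2 : δ₁ ⊓ δ₂ ≤ δ₂ := min_le_right δ₁ δ₂; linarith)
  rw [abs_le]
  constructor <;> linarith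

end fermi2

section energy

variable {d : ℕ} (hd : 1 ≤ d)

lemma epsk_integrableOn (d : ℕ) {S : Set (Fin d → ℝ)} (hS : MeasurableSet S)
    (hSB : S ⊆ Bset d) : MeasureTheory.IntegrableOn (epsk d) S := by
  refine MeasureTheory.Measure.integrableOn_of_bounded ?_ (epsk_continuous d).aestronglyMeasurable
    (M := 4 * d) (Filter.Eventually.of_forall fun k => ?_)
  · exact ((measure_mono hSB).trans_lt (by rw [Bset_vol]; exact ENNReal.ofReal_lt_top)).ne
  · rw [Real.norm_eq_abs, abs_of_nonneg (epsk_nonneg d k)]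
    exact epsk_le d k

lemma enGS_eq (d : ℕ) (ρ : ℝ) :
    enGS d ρ = (∫ k in Aset d (fermiLevel d ρ), epsk d k) / (2 * π) ^ d := rfl

include hd in
lemma enGS_shell {ρ ρ' : ℝ} (hρ : 0 < ρ) (h : ρ ≤ ρ') (h1 : ρ' ≤ 1) :
    fermiLevel d ρ * (ρ' - ρ) ≤ enGS d ρ' - enGS d ρ ∧
    enGS d ρ' - enGS d ρ ≤ fermiLevel d ρ' * (ρ' - ρ) := by
  have hρ' : 0 < ρ' := lt_of_lt_of_le hρ h
  set F := fermiLevel d ρ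
  set F' := fermiLevel d ρ'
  have hFle : F ≤ F' := fermiLevel_mono hd hρ h h1
  set A := Aset d F
  set A' := Aset d F'
  have hsub : A ⊆ A' := Aset_mono d hFle
  have hmeasA := Aset_meas d F
  have hmeasA' := Aset_meas d F'
  have hintA' : MeasureTheory.IntegrableOn (epsk d) A' := epsk_integrableOn d hmeasA' (Aset_subset d F')
  have hdiffmeas : MeasurableSet (A' \ A) := hmeasA'.diff hmeasA
  have hdiffsub : A' \ A ⊆ Bset d := (Set.diff_subset).trans (Aset_subset d F')
  have hintdiff : MeasureTheory.IntegrableOn (epsk d) (A' \ A) := epsk_integrableOn d hdiffmeas hdiffsub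
  -- difference of integrals
  have hde : enGS d ρ' - enGS d ρ = (∫ k in A' \ A, epsk d k) / (2 * π) ^ d := by
    rw [enGS_eq, enGS_eq, div_sub_div_same]
    congr 1
    rw [MeasureTheory.integral_diff hmeasA hintA' hsub]
  -- volume of shell
  have hvol : (volume (A' \ A)).toReal = (ρ' - ρ) * (2 * π) ^ d := by
    have h1' := volBelow_diff d hFle
    have h2' := fermiLevel_solves hd hρ (h.trans h1)
    have h3' := fermiLevel_solves hd hρ' h1
    rw [← h1']
    field_simp at h2' h3'
    rw [h2', h3']
    ring
  have hvol' : volume (A' \ A) ≠ ⊤ := by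
    exact ((measure_mono hdiffsub).trans_lt (by rw [Bset_vol]; exact ENNReal.ofReal_lt_top)).ne
  -- bounds on the integral
  have hlow : (ρ' - ρ) * (2 * π) ^ d * F ≤ ∫ k in A' \ A, epsk d k := by
    have hc : ∫ _k in A' \ A, F ≤ ∫ k in A' \ A, epsk d k := by
      refine MeasureTheory.setIntegral_mono_on
        (MeasureTheory.integrableOn_const hvol') hintdiff hdiffmeas ?_
      rintro k ⟨hkA', hkA⟩
      by_contra hcon
      push_neg at hcon
      exact hkA ⟨hkA'.1, hcon⟩
    rwa [MeasureTheory.setIntegral_const, measureReal_def, hvol, smul_eq_mul] at hc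
  have hhigh : ∫ k in A' \ A, epsk d k ≤ (ρ' - ρ) * (2 * π) ^ d * F' := by
    have hc : ∫ k in A' \ A, epsk d k ≤ ∫ _k in A' \ A, F' := by
      refine MeasureTheory.setIntegral_mono_on hintdiff
        (MeasureTheory.integrableOn_const hvol') hdiffmeas ?_
      rintro k ⟨hkA', _⟩
      exact hkA'.2.le
    rwa [MeasureTheory.setIntegral_const, measureReal_def, hvol, smul_eq_mul] at hc
  rw [hde]
  constructor
  · rw [le_div_iff₀ (twopi_pos d)]
    calc F * (ρ' - ρ) * (2*π)^d = (ρ' - ρ) * (2*π)^d * F := by ring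
    _ ≤ _ := hlow
  · rw [div_le_iff₀ (twopi_pos d)]
    calc (∫ k in A' \ A, epsk d k) ≤ (ρ' - ρ) * (2*π)^d * F' := hhigh
    _ = F' * (ρ' - ρ) * (2*π)^d := by ring

end energy

section derivs

variable {d : ℕ} (hd : 1 ≤ d)

include hd in
lemma xiFun_mono {ρ ρ' : ℝ} (hρ : 0 < ρ) (h : ρ ≤ ρ') (h1 : ρ' ≤ 1) :
    xiFun d ρ ≤ xiFun d ρ' := by
  have hsh := (enGS_shell hd hρ h h1).2
  have hF := fermiLevel_mono hd hρ h h1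
  unfold xiFun
  nlinarith [fermiLevel_nonneg hd hρ (h.trans h1)]

include hd in
lemma enGS_cont : ContinuousOn (enGS d) (Set.Ioc 0 1) := by
  intro ρ₀ hρ₀
  rw [Metric.continuousWithinAt_iff]
  intro ε hε
  refine ⟨ε / (4 * d + 1), by positivity, fun ρ hρ hdist => ?_⟩
  rw [Real.dist_eq] at hdist ⊢
  have hb : ∀ {a b : ℝ}, 0 < a → a ≤ b → b ≤ 1 → |enGS d b - enGS d a| ≤ 4 * d * (b - a) := by
    intro a b ha hab hb1
    have hsh := enGS_shell hd ha hab hb1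
    have hF0 : 0 ≤ fermiLevel d a := fermiLevel_nonneg hd ha (hab.trans hb1)
    have hF4 : fermiLevel d b ≤ 4 * d := fermiLevel_le4d hd (ha.trans_le hab) hb1
    rw [abs_le]
    constructor
    · nlinarith
    · nlinarith
  have hd1 : (0:ℝ) < 4 * d + 1 := by positivity
  rcases le_total ρ ρ₀ with h | h
  · have := hb hρ.1 h hρ₀.2
    rw [abs_sub_comm] at this
    calc |enGS d ρ - enGS d ρ₀| ≤ 4 * d * (ρ₀ - ρ) := this
    _ ≤ (4 * d + 1) * (ρ₀ - ρ) := by nlinarith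
    _ < (4 * d + 1) * (ε / (4 * d + 1)) := by
        apply mul_lt_mul_of_pos_left _ hd1
        rw [abs_le'] at *
        calc ρ₀ - ρ ≤ |ρ - ρ₀| := by rw [abs_sub_comm]; exact le_abs_self _
        _ < _ := hdist
    _ = ε := by field_simp
  · have := hb hρ₀.1 h hρ.2
    calc |enGS d ρ - enGS d ρ₀| ≤ 4 * d * (ρ - ρ₀) := this
    _ ≤ (4 * d + 1) * (ρ - ρ₀) := by nlinarith
    _ < (4 * d + 1) * (ε / (4 * d + 1)) := by
        apply mul_lt_mul_of_pos_left _ hd1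
        calc ρ - ρ₀ ≤ |ρ - ρ₀| := le_abs_self _
        _ < _ := hdist
    _ = ε := by field_simp

include hd in
lemma enGS_hasDeriv {ρ₀ : ℝ} (hρ₀ : 0 < ρ₀) (hρ₀1 : ρ₀ < 1) :
    HasDerivAt (enGS d) (fermiLevel d ρ₀) ρ₀ := by
  rw [hasDerivAt_iff_tendsto_slope]
  rw [Metric.tendsto_nhdsWithin_nhds]
  intro ε hε
  obtain ⟨δ, hδpos, hδ⟩ := fermiLevel_approx hd hρ₀ hρ₀1 (half_pos hε)
  refine ⟨min δ (min ρ₀ (1 - ρ₀)), lt_min hδpos (lt_min hρ₀ (by linarith)), fun ρ hρne hdist => ?_⟩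
  rw [Real.dist_eq] at hdist
  have hδ' := lt_of_lt_of_le hdist (min_le_left _ _)
  have hρbound := lt_of_lt_of_le hdist (min_le_right _ _)
  have hρ0 : 0 < ρ := by
    have := lt_of_lt_of_le hρbound (min_le_left _ _)
    rw [abs_lt] at this
    linarith
  have hρ1 : ρ < 1 := by
    have := lt_of_lt_of_le hρbound (min_le_right _ _)
    rw [abs_lt] at this
    linarith
  have hne : ρ ≠ ρ₀ := hρne
  have hFρ := hδ ρ hρ0 hρ1.le hδ'
  rw [abs_le] at hFρ
  have hkey : |slope (enGS d) ρ₀ ρ - fermiLevel d ρ₀| ≤ ε / 2 := by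
    rcases lt_or_gt_of_ne hne with h | h
    · -- ρ < ρ₀
      have hsh := enGS_shell hd hρ0 h.le hρ₀1.le
      have hpos : 0 < ρ₀ - ρ := by linarith
      have hslope : slope (enGS d) ρ₀ ρ = (enGS d ρ₀ - enGS d ρ) / (ρ₀ - ρ) := by
        rw [slope_def_field]
        rw [div_eq_div_iff (by linarith) (by linarith)]
        ring
      have hlo : fermiLevel d ρ ≤ (enGS d ρ₀ - enGS d ρ) / (ρ₀ - ρ) :=
        (le_div_iff₀ hpos).mpr (by nlinarith [hsh.1])
      have hhi : (enGS d ρ₀ - enGS d ρ) / (ρ₀ - ρ) ≤ fermiLevel d ρ₀ :=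
        (div_le_iff₀ hpos).mpr (by nlinarith [hsh.2])
      rw [hslope, abs_le]
      constructor <;> linarith [hFρ.1, hFρ.2]
    · -- ρ₀ < ρ
      have hsh := enGS_shell hd hρ₀ h.le hρ1.le
      have hpos : 0 < ρ - ρ₀ := by linarith
      have hslope : slope (enGS d) ρ₀ ρ = (enGS d ρ - enGS d ρ₀) / (ρ - ρ₀) := by
        rw [slope_def_field]
      have hlo : fermiLevel d ρ₀ ≤ (enGS d ρ - enGS d ρ₀) / (ρ - ρ₀) :=
        (le_div_iff₀ hpos).mpr (by nlinarith [hsh.1])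
      have hhi : (enGS d ρ - enGS d ρ₀) / (ρ - ρ₀) ≤ fermiLevel d ρ :=
        (div_le_iff₀ hpos).mpr (by nlinarith [hsh.2])
      rw [hslope, abs_le]
      constructor <;> linarith [hFρ.1, hFρ.2]
  calc dist (slope (enGS d) ρ₀ ρ) (fermiLevel d ρ₀) = |slope (enGS d) ρ₀ ρ - fermiLevel d ρ₀| := rfl
  _ ≤ ε / 2 := hkey
  _ < ε := by linarith

end derivs

section main

variable {d : ℕ} (hd : 1 ≤ d) {t ρ1 ρ2 : ℝ}

include hd in
lemma main_deriv (ht0 : 0 ≤ t) (h1 : 0 < ρ1) (h2 : 0 < ρ2) (hsum : ρ1 + ρ2 < 1)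
    {ν : ℝ} (hν : ν ∈ Set.Ioo ρ2 (1 - ρ1)) :
    HasDerivAt (fun ν => (1 - ν) * enGS d (ρ1 / (1 - ν)) + t * ν * enGS d (ρ2 / ν))
      (xiFun d (ρ1 / (1 - ν)) - t * xiFun d (ρ2 / ν)) ν := by
  obtain ⟨hνl, hνr⟩ := hν
  have hν0 : 0 < ν := lt_trans h2 hνl
  have h1ν : ρ1 < 1 - ν := by linarith
  have h1νpos : 0 < 1 - ν := by linarith
  have hφ1mem : ρ1 / (1 - ν) ∈ Set.Ioo (0:ℝ) 1 := by
    constructor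
    · positivity
    · rw [div_lt_one h1νpos]; exact h1ν
  have hφ2mem : ρ2 / ν ∈ Set.Ioo (0:ℝ) 1 := by
    constructor
    · positivity
    · rw [div_lt_one hν0]; exact hνl
  -- derivative of φ1
  have hφ1 : HasDerivAt (fun ν => ρ1 / (1 - ν)) (ρ1 / (1 - ν)^2) ν := by
    have h := (hasDerivAt_const ν ρ1).div ((hasDerivAt_const ν (1:ℝ)).sub (hasDerivAt_id ν))
      h1νpos.ne'
    refine h.congr_deriv ?_
    simp only [Pi.sub_apply, id_eq]
    ring
  have hφ2 : HasDerivAt (fun ν => ρ2 / ν) (-(ρ2 / ν^2)) ν := by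
    have h := (hasDerivAt_const ν ρ2).div (hasDerivAt_id ν) hν0.ne'
    refine h.congr_deriv ?_
    simp only [id_eq]
    ring
  -- derivative of enGS at the composed points
  have he1 : HasDerivAt (enGS d) (fermiLevel d (ρ1 / (1 - ν))) (ρ1 / (1 - ν)) :=
    enGS_hasDeriv hd hφ1mem.1 hφ1mem.2
  have he2 : HasDerivAt (enGS d) (fermiLevel d (ρ2 / ν)) (ρ2 / ν) :=
    enGS_hasDeriv hd hφ2mem.1 hφ2mem.2
  have hc1 : HasDerivAt (fun ν => enGS d (ρ1 / (1 - ν)))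
      (fermiLevel d (ρ1 / (1 - ν)) * (ρ1 / (1 - ν)^2)) ν := HasDerivAt.comp (h₂ := enGS d) ν he1 hφ1
  have hc2 : HasDerivAt (fun ν => enGS d (ρ2 / ν))
      (fermiLevel d (ρ2 / ν) * (-(ρ2 / ν^2))) ν := HasDerivAt.comp (h₂ := enGS d) ν he2 hφ2
  -- products
  have hp1 : HasDerivAt (fun ν => (1 - ν) * enGS d (ρ1 / (1 - ν)))
      (xiFun d (ρ1 / (1 - ν))) ν := by
    have h := ((hasDerivAt_const ν (1:ℝ)).sub (hasDerivAt_id ν)).mul hc1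
    refine h.congr_deriv ?_
    unfold xiFun
    have : (1 - ν) * (fermiLevel d (ρ1 / (1 - ν)) * (ρ1 / (1 - ν)^2))
        = (ρ1 / (1 - ν)) * fermiLevel d (ρ1 / (1 - ν)) := by
      field_simp
    simp only [Pi.sub_apply, Pi.mul_apply, id]
    rw [this]
    ring
  have hp2 : HasDerivAt (fun ν => t * ν * enGS d (ρ2 / ν))
      (-(t * xiFun d (ρ2 / ν))) ν := by
    have h := ((hasDerivAt_const ν t).mul (hasDerivAt_id ν)).mul hc2
    refine h.congr_deriv ?_
    unfold xiFun
    have : t * ν * (fermiLevel d (ρ2 / ν) * (-(ρ2 / ν^2)))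
        = -(t * ((ρ2 / ν) * fermiLevel d (ρ2 / ν))) := by
      field_simp
    simp only [Pi.sub_apply, Pi.mul_apply, id]
    rw [this]
    ring
  have h := hp1.add hp2
  rw [sub_eq_add_neg]
  exact h

/-- For `d ≥ 1`, `t ∈ [0,1]` and densities `ρ1, ρ2 > 0` with `ρ1 + ρ2 < 1`, the
segregated energy per site `E(ν) = (1−ν)·e(ρ1/(1−ν)) + t·ν·e(ρ2/ν)` is convex on
`[ρ2, 1−ρ1]` and differentiable on the interior with
`E′(ν) = ξ(ρ1/(1−ν)) − t·ξ(ρ2/ν)`. -/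
theorem segregated_energy_convex (d : ℕ) (hd : 1 ≤ d) (t ρ1 ρ2 : ℝ)
    (ht0 : 0 ≤ t) (ht1 : t ≤ 1) (h1 : 0 < ρ1) (h2 : 0 < ρ2) (hsum : ρ1 + ρ2 < 1) :
    ConvexOn ℝ (Set.Icc ρ2 (1 - ρ1))
      (fun ν => (1 - ν) * enGS d (ρ1 / (1 - ν)) + t * ν * enGS d (ρ2 / ν)) ∧
    (∀ ν ∈ Set.Ioo ρ2 (1 - ρ1),
      HasDerivAt (fun ν => (1 - ν) * enGS d (ρ1 / (1 - ν)) + t * ν * enGS d (ρ2 / ν))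
        (xiFun d (ρ1 / (1 - ν)) - t * xiFun d (ρ2 / ν)) ν) := by
  constructor
  · -- convexity
    have hint : interior (Set.Icc ρ2 (1 - ρ1)) = Set.Ioo ρ2 (1 - ρ1) := interior_Icc
    refine MonotoneOn.convexOn_of_deriv (convex_Icc _ _) ?_ ?_ ?_
    · -- continuity
      have hm1 : ∀ ν ∈ Set.Icc ρ2 (1 - ρ1), ρ1 / (1 - ν) ∈ Set.Ioc (0:ℝ) 1 := by
        rintro ν ⟨ha, hb⟩
        have h1νpos : 0 < 1 - ν := by linarith
        exact ⟨by positivity, by rw [div_le_one h1νpos]; linarith⟩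
      have hm2 : ∀ ν ∈ Set.Icc ρ2 (1 - ρ1), ρ2 / ν ∈ Set.Ioc (0:ℝ) 1 := by
        rintro ν ⟨ha, hb⟩
        have hν0 : 0 < ν := lt_of_lt_of_le h2 ha
        exact ⟨by positivity, by rw [div_le_one hν0]; linarith⟩
      have hcφ1 : ContinuousOn (fun ν => ρ1 / (1 - ν)) (Set.Icc ρ2 (1 - ρ1)) := by
        apply ContinuousOn.div continuousOn_const
          (continuous_const.sub continuous_id).continuousOn
        rintro ν ⟨ha, hb⟩
        intro h
        have : 0 < 1 - ν := by linarith
        linarith [this.trans_eq h]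
      have hcφ2 : ContinuousOn (fun ν => ρ2 / ν) (Set.Icc ρ2 (1 - ρ1)) := by
        apply ContinuousOn.div continuousOn_const continuousOn_id
        rintro ν ⟨ha, hb⟩
        intro h
        have : 0 < ν := lt_of_lt_of_le h2 ha
        linarith [this.trans_eq h]
      exact (((continuous_const.sub continuous_id).continuousOn).mul
          ((enGS_cont hd).comp hcφ1 hm1)).add
        (((continuous_const.mul continuous_id).continuousOn).mul
          ((enGS_cont hd).comp hcφ2 hm2))
    · -- differentiability on interior
      rw [interior_Icc]
      intro ν hν
      exact ((main_deriv hd ht0 h1 h2 hsum hν).differentiableAt).differentiableWithinAt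
    · -- monotone derivative
      rw [interior_Icc]
      intro ν hν ν' hν' hle
      rw [(main_deriv hd ht0 h1 h2 hsum hν).deriv, (main_deriv hd ht0 h1 h2 hsum hν').deriv]
      obtain ⟨hνl, hνr⟩ := hν
      obtain ⟨hνl', hνr'⟩ := hν'
      have hν0 : 0 < ν := lt_trans h2 hνl
      have hν0' : 0 < ν' := lt_trans h2 hνl'
      have h1νpos : 0 < 1 - ν := by linarith
      have h1νpos' : 0 < 1 - ν' := by linarith
      have hφ1le : ρ1 / (1 - ν) ≤ ρ1 / (1 - ν') := by
        rw [div_le_div_iff₀ h1νpos h1νpos']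
        nlinarith
      have hφ2le : ρ2 / ν' ≤ ρ2 / ν := by
        rw [div_le_div_iff₀ hν0' hν0]
        nlinarith
      have hx1 : xiFun d (ρ1 / (1 - ν)) ≤ xiFun d (ρ1 / (1 - ν')) :=
        xiFun_mono hd (by positivity) hφ1le (by rw [div_le_one h1νpos']; linarith)
      have hx2 : xiFun d (ρ2 / ν') ≤ xiFun d (ρ2 / ν) :=
        xiFun_mono hd (by positivity) hφ2le (by rw [div_le_one hν0]; linarith)
      have := mul_le_mul_of_nonneg_left hx2 ht0
      linarith
  · intro ν hν
    exact main_deriv hd ht0 h1 h2 hsum hν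

end main


end
end
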